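/- arXiv:alg-geom/9608010 — 9 statements merged into one kernel-verified Lean document; each statement's English description precedes it below -/
import Mathlib

section
/- If f₁,…,f_s ∈ ℤ[X₁,…,Xₙ] are polynomials having no common zero in ℂⁿ, then there exist a nonzero integer a and polynomials g₁,…,g_s ∈ ℤ[X₁,…,Xₙ] such that a = g₁f₁ + ⋯ + g_sf_s holds in ℤ[X₁,…,Xₙ]. -/
open MvPolynomial

/-- Clearing denominators for a multivariate polynomial over `ℚ`. -/
lemma exists_clear_denoms {σ : Type*} (p : MvPolynomial σ ℚ) :
    ∃ (d : ℤ) (q : MvPolynomial σ ℤ), d ≠ 0 ∧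
      MvPolynomial.map (Int.castRingHom ℚ) q = MvPolynomial.C (d : ℚ) * p := by
  induction p using MvPolynomial.induction_on with
  | C a =>
      refine ⟨(a.den : ℤ), MvPolynomial.C a.num, by exact_mod_cast a.den_nz, ?_⟩
      rw [MvPolynomial.map_C, ← MvPolynomial.C_mul]
      congr 1
      push_cast
      rw [mul_comm]
      exact_mod_cast (Rat.num_div_den a ▸ div_mul_cancel₀ (a.num : ℚ) (by exact_mod_cast a.den_nz)).symm
  | add p q hp hq =>
      obtain ⟨d1, q1, hd1, h1⟩ := hp
      obtain ⟨d2, q2, hd2, h2⟩ := hq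
      refine ⟨d1 * d2, MvPolynomial.C d2 * q1 + MvPolynomial.C d1 * q2, mul_ne_zero hd1 hd2, ?_⟩
      simp only [map_add, map_mul, MvPolynomial.map_C, h1, h2, Int.coe_castRingHom]
      push_cast
      rw [MvPolynomial.C_mul]
      ring
  | mul_X p i hp =>
      obtain ⟨d, q, hd, h⟩ := hp
      exact ⟨d, q * MvPolynomial.X i, hd, by simp [map_mul, h, mul_assoc]⟩

/-- Weak effective Nullstellensatz over ℤ.
If `f₁, …, f_s ∈ ℤ[X₁,…,Xₙ]` have no common zero in `ℂⁿ`, then there exist a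
nonzero integer `a` and polynomials `g₁, …, g_s ∈ ℤ[X₁,…,Xₙ]` with
`a = g₁ f₁ + ⋯ + g_s f_s`. -/
theorem statement_0 (n s : ℕ) (f : Fin s → MvPolynomial (Fin n) ℤ)
    (hnozero : ¬ ∃ x : Fin n → ℂ, ∀ i, MvPolynomial.aeval x (f i) = 0) :
    ∃ (a : ℤ) (g : Fin s → MvPolynomial (Fin n) ℤ),
      a ≠ 0 ∧ MvPolynomial.C a = ∑ i, g i * f i := by
  classical
  set F : Fin s → MvPolynomial (Fin n) ℚ :=
    fun i => MvPolynomial.map (Int.castRingHom ℚ) (f i) with hF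
  have hI : Ideal.span (Set.range F) = ⊤ := by
    by_contra h
    obtain ⟨m, hm, him⟩ := Ideal.exists_le_maximal _ h
    haveI := hm
    letI : Field (MvPolynomial (Fin n) ℚ ⧸ m) := Ideal.Quotient.field m
    have hint : ((Ideal.Quotient.mk m).comp MvPolynomial.C).IsIntegral :=
      MvPolynomial.quotient_mk_comp_C_isIntegral_of_isJacobsonRing m
    haveI : Algebra.IsIntegral ℚ (MvPolynomial (Fin n) ℚ ⧸ m) := ⟨hint⟩
    haveI : NoZeroSMulDivisors ℚ (MvPolynomial (Fin n) ℚ ⧸ m) :=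
      by infer_instance
    haveI : Algebra.IsAlgebraic ℚ (MvPolynomial (Fin n) ℚ ⧸ m) :=
      Algebra.IsIntegral.isAlgebraic
    let φ : (MvPolynomial (Fin n) ℚ ⧸ m) →ₐ[ℚ] ℂ := IsAlgClosed.lift
    set x : Fin n → ℂ := fun i => φ (Ideal.Quotient.mk m (MvPolynomial.X i)) with hx
    apply hnozero
    refine ⟨x, fun i => ?_⟩
    have key : (MvPolynomial.aeval x : MvPolynomial (Fin n) ℤ →ₐ[ℤ] ℂ).toRingHom =
        (φ.toRingHom.comp (Ideal.Quotient.mk m)).comp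
          (MvPolynomial.map (Int.castRingHom ℚ)) := by
      apply MvPolynomial.ringHom_ext
      · intro r
        simp only [AlgHom.toRingHom_eq_coe, RingHom.coe_coe, MvPolynomial.aeval_C,
          RingHom.coe_comp, Function.comp_apply, MvPolynomial.map_C]
        rw [show ((Ideal.Quotient.mk m) (MvPolynomial.C ((Int.castRingHom ℚ) r))) =
            algebraMap ℚ _ ((Int.castRingHom ℚ) r) from rfl, φ.commutes]
        simp
      · intro i
        simp [x]
    have : MvPolynomial.aeval x (f i) =
        φ (Ideal.Quotient.mk m (F i)) := by
      have := congrArg (fun ψ => ψ (f i)) key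
      simpa using this
    rw [this]
    have hFi : F i ∈ m := him (Ideal.subset_span ⟨i, rfl⟩)
    rw [(Ideal.Quotient.eq_zero_iff_mem).mpr hFi, map_zero]
  have h1 : (1 : MvPolynomial (Fin n) ℚ) ∈ Ideal.span (Set.range F) := by
    rw [hI]; trivial
  rw [Ideal.mem_span_range_iff_exists_fun] at h1
  obtain ⟨c, hc⟩ := h1
  choose d q hd hq using fun i => exists_clear_denoms (c i)
  refine ⟨∏ i, d i, fun i => MvPolynomial.C (∏ j ∈ Finset.univ.erase i, d j) * q i,
    Finset.prod_ne_zero_iff.mpr fun i _ => hd i, ?_⟩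
  apply MvPolynomial.map_injective (Int.castRingHom ℚ) Int.cast_injective
  rw [map_sum, MvPolynomial.map_C]
  calc MvPolynomial.C ((Int.castRingHom ℚ) (∏ i, d i))
      = MvPolynomial.C ((∏ i, d i : ℤ) : ℚ) * ∑ i, c i * F i := by
        rw [hc, mul_one]; norm_num
    _ = ∑ i, MvPolynomial.map (Int.castRingHom ℚ)
          (MvPolynomial.C (∏ j ∈ Finset.univ.erase i, d j) * q i * f i) := by
        rw [Finset.mul_sum]
        refine Finset.sum_congr rfl fun i _ => ?_
        rw [map_mul, map_mul, MvPolynomial.map_C, hq i,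
          show (MvPolynomial.map (Int.castRingHom ℚ)) (f i) = F i from rfl]
        simp only [Int.coe_castRingHom]
        have : (∏ j, d j) = d i * ∏ j ∈ Finset.univ.erase i, d j :=
          (Finset.mul_prod_erase Finset.univ d (Finset.mem_univ i)).symm
        rw [this]
        push_cast
        rw [MvPolynomial.C_mul]
        ring
end

section
/- Let f₁,…,f_n, f_{n+1} ∈ ℤ[X₁,…,Xₙ] be polynomials having no common zero in ℂⁿ, where f₁,…,fₙ form a regular sequence in ℚ[X₁,…,Xₙ] whose common zero set in ℂⁿ is finite. Then there exist a nonzero integer a and a polynomial g_{n+1} ∈ ℤ[X₁,…,Xₙ] such that a − g_{n+1}·f_{n+1} belongs to the ideal generated by f₁,…,fₙ in ℤ[X₁,…,Xₙ]. -/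
open MvPolynomial

private lemma clear_denom' {n : ℕ} (q : MvPolynomial (Fin n) ℚ) :
    ∃ (d : ℤ) (Q : MvPolynomial (Fin n) ℤ), 0 < d ∧
      MvPolynomial.C (d : ℚ) * q = MvPolynomial.map (Int.castRingHom ℚ) Q := by
  classical
  set d : ℤ := ∏ m ∈ q.support, ((q.coeff m).den : ℤ) with hd
  have hdpos : 0 < d := Finset.prod_pos (fun m _ => by positivity)
  refine ⟨d, ∑ m ∈ q.support, monomial m ((d / ((q.coeff m).den : ℤ)) * (q.coeff m).num), hdpos, ?_⟩
  conv_lhs => rw [as_sum q]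
  rw [Finset.mul_sum, map_sum]
  refine Finset.sum_congr rfl fun m hm => ?_
  have hdvd : ((q.coeff m).den : ℤ) ∣ d := Finset.dvd_prod_of_mem _ hm
  obtain ⟨e, he⟩ := hdvd
  have hden : ((q.coeff m).den : ℤ) ≠ 0 := by positivity
  rw [map_monomial, C_mul_monomial]
  congr 1
  rw [he, Int.mul_ediv_cancel_left _ hden]
  have hden2 : ((q.coeff m).den : ℚ) * q.coeff m = ((q.coeff m).num : ℚ) :=
    Rat.den_mul_eq_num (q.coeff m)
  push_cast
  rw [mul_comm ((q.coeff m).den : ℚ) (q.coeff m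
    )] at hden2
  calc ((q.coeff m).den : ℚ) * (e:ℚ) * q.coeff m
      = (e:ℚ) * (q.coeff m * ((q.coeff m).den:ℚ)) := by ring
    _ = (e:ℚ) * ((q.coeff m).num : ℚ) := by rw [hden2]
    _ = (Int.castRingHom ℚ) (e * (q.coeff m).num) := by simp [Int.cast_mul]

private lemma span_top_of_no_common_zero' {n : ℕ} (S : Set (MvPolynomial (Fin n) ℚ))
    (hnozero : ¬ ∃ x : Fin n → ℂ, ∀ p ∈ S, MvPolynomial.aeval x p = 0) :
    Ideal.span S = ⊤ := by
  by_contra hne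
  obtain ⟨m, hmmax, hsub⟩ := Ideal.exists_le_maximal _ hne
  haveI := hmmax
  have hint : RingHom.IsIntegral ((Ideal.Quotient.mk m).comp MvPolynomial.C) :=
    MvPolynomial.quotient_mk_comp_C_isIntegral_of_isJacobsonRing m
  have halgmap : algebraMap ℚ (MvPolynomial (Fin n) ℚ ⧸ m) =
      (Ideal.Quotient.mk m).comp MvPolynomial.C := rfl
  haveI : Algebra.IsIntegral ℚ (MvPolynomial (Fin n) ℚ ⧸ m) := by
    rw [Algebra.isIntegral_def]
    intro x
    rw [IsIntegral, RingHom.IsIntegralElem, halgmap]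
    exact hint x
  haveI : Algebra.IsAlgebraic ℚ (MvPolynomial (Fin n) ℚ ⧸ m) :=
    Algebra.IsIntegral.isAlgebraic
  haveI : FaithfulSMul ℚ (MvPolynomial (Fin n) ℚ ⧸ m) :=
    (faithfulSMul_iff_algebraMap_injective ℚ (MvPolynomial (Fin n) ℚ ⧸ m)).mpr (algebraMap ℚ _).injective
  let φ : MvPolynomial (Fin n) ℚ →ₐ[ℚ] ℂ :=
    (IsAlgClosed.lift (R := ℚ) (M := ℂ)).comp (Ideal.Quotient.mkₐ ℚ m)
  refine hnozero ⟨fun i => φ (X i), fun p hp => ?_⟩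
  have h1 : aeval (fun i => φ (X i)) p = φ p := by
    conv_rhs => rw [MvPolynomial.aeval_unique φ]
    rfl
  rw [h1]
  have h0 : (Ideal.Quotient.mk m) p = 0 :=
    (Ideal.Quotient.eq_zero_iff_mem).mpr (hsub (Ideal.subset_span hp))
  show IsAlgClosed.lift ((Ideal.Quotient.mk m) p) = 0
  rw [h0, map_zero]

set_option linter.unusedVariables false

/-- A division step in the effective Nullstellensatz.
Let `f₁, …, fₙ, f_{n+1} ∈ ℤ[X₁,…,Xₙ]` have no common zero in `ℂⁿ`, where
`f₁, …, fₙ` form a regular sequence in `ℚ[X₁,…,Xₙ]` whose common zero set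
in `ℂⁿ` is finite.  Then there exist a nonzero integer `a` and a polynomial
`g_{n+1} ∈ ℤ[X₁,…,Xₙ]` such that `a − g_{n+1}·f_{n+1}` belongs to the ideal
generated by `f₁, …, fₙ` in `ℤ[X₁,…,Xₙ]`. -/
theorem statement_1 (n : ℕ) (f : Fin n → MvPolynomial (Fin n) ℤ)
    (fn1 : MvPolynomial (Fin n) ℤ)
    -- `f₁, …, fₙ` is a regular sequence in `ℚ[X₁,…,Xₙ]`:
    (hreg : ∀ i : Fin n, ∀ g : MvPolynomial (Fin n) ℚ,
      g * MvPolynomial.map (Int.castRingHom ℚ) (f i) ∈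
        Ideal.span ((fun j : Fin n => MvPolynomial.map (Int.castRingHom ℚ) (f j)) ''
          {j | j < i}) →
      g ∈ Ideal.span ((fun j : Fin n => MvPolynomial.map (Int.castRingHom ℚ) (f j)) ''
          {j | j < i}))
    -- the common zero set of `f₁, …, fₙ` in `ℂⁿ` is finite:
    (hfin : {x : Fin n → ℂ | ∀ i, MvPolynomial.aeval x (f i) = 0}.Finite)
    -- `f₁, …, fₙ, f_{n+1}` have no common zero in `ℂⁿ`:
    (hnozero : ¬ ∃ x : Fin n → ℂ,
        (∀ i, MvPolynomial.aeval x (f i) = 0) ∧ MvPolynomial.aeval x fn1 = 0) :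
    ∃ (a : ℤ) (g : MvPolynomial (Fin n) ℤ), a ≠ 0 ∧
      MvPolynomial.C a - g * fn1 ∈ Ideal.span (Set.range f) := by
  classical
  set F : Fin n → MvPolynomial (Fin n) ℚ := fun i => map (Int.castRingHom ℚ) (f i) with hF
  set F1 : MvPolynomial (Fin n) ℚ := map (Int.castRingHom ℚ) fn1 with hF1
  have haeval : ∀ (x : Fin n → ℂ) (p : MvPolynomial (Fin n) ℤ),
      aeval x (map (Int.castRingHom ℚ) p) = aeval x p := by
    intro x p
    rw [← algebraMap_int_eq, aeval_map_algebraMap]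
  have htop : Ideal.span (Set.range F ∪ {F1}) = ⊤ := by
    apply span_top_of_no_common_zero'
    rintro ⟨x, hx⟩
    refine hnozero ⟨x, fun i => ?_, ?_⟩
    · have := hx (F i) (Or.inl ⟨i, rfl⟩)
      rwa [hF, haeval] at this
    · have := hx F1 (Or.inr rfl)
      rwa [hF1, haeval] at this
  have hone : (1 : MvPolynomial (Fin n) ℚ) ∈ Ideal.span (Set.range F ∪ {F1}) := by
    rw [htop]; trivial
  rw [Ideal.span_union] at hone
  obtain ⟨p, hp, q, hq, hpq⟩ := Submodule.mem_sup.mp hone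
  obtain ⟨g', hg'⟩ := Ideal.mem_span_singleton'.mp hq
  obtain ⟨c, hc⟩ := Ideal.mem_span_range_iff_exists_fun.mp hp
  -- clear denominators
  choose d Q hdpos hQ using fun i => clear_denom' (c i)
  obtain ⟨dg, G, hdgpos, hG⟩ := clear_denom' g'
  set D : ℤ := dg * ∏ i, d i with hD
  have hDpos : 0 < D := mul_pos hdgpos (Finset.prod_pos fun i _ => hdpos i)
  have hdvd : ∀ i, d i ∣ D := fun i =>
    Dvd.dvd.mul_left (Finset.dvd_prod_of_mem d (Finset.mem_univ i)) dg
  have hdgdvd : dg ∣ D := Dvd.intro _ rfl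
  have key : ∀ (e : ℤ) (r : MvPolynomial (Fin n) ℚ) (R : MvPolynomial (Fin n) ℤ),
      e ∣ D → MvPolynomial.C (e : ℚ) * r = map (Int.castRingHom ℚ) R →
      MvPolynomial.C (D : ℚ) * r = map (Int.castRingHom ℚ) (MvPolynomial.C (D / e) * R) := by
    intro e r R ⟨k, hk⟩ hr
    have he : e ≠ 0 := by rintro rfl; rw [zero_mul] at hk; omega
    have hDe : D / e = k := by rw [hk, Int.mul_ediv_cancel_left _ he]
    have h1 : (MvPolynomial.C (D:ℚ) : MvPolynomial (Fin n) ℚ) =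
        MvPolynomial.C ((k:ℚ)) * MvPolynomial.C ((e:ℚ)) := by
      rw [← map_mul]; congr 1; rw [hk]; push_cast; ring
    rw [hDe, map_mul, map_C, h1, mul_assoc, hr]
    norm_num
  -- the integer identity
  have hmain : map (Int.castRingHom ℚ) (MvPolynomial.C D) =
      map (Int.castRingHom ℚ)
        ((∑ i, MvPolynomial.C (D / d i) * Q i * f i) + (MvPolynomial.C (D / dg) * G) * fn1) := by
    rw [map_C]
    calc (MvPolynomial.C (D : ℚ) : MvPolynomial (Fin n) ℚ)
        = MvPolynomial.C (D : ℚ) * (p + q) := by rw [hpq, mul_one]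
      _ = (∑ i, (MvPolynomial.C (D : ℚ) * c i) * F i) + (MvPolynomial.C (D : ℚ) * g') * F1 := by
          rw [mul_add, ← hc, ← hg', Finset.mul_sum]; ring_nf
      _ = _ := by
          rw [map_add, map_sum]
          congr 1
          · refine Finset.sum_congr rfl fun i _ => ?_
            rw [key (d i) (c i) (Q i) (hdvd i) (hQ i)]
            simp only [map_mul, hF]
          · rw [key dg g' G hdgdvd hG]
            simp only [map_mul, hF1]
  have hZ : MvPolynomial.C D =
      (∑ i, MvPolynomial.C (D / d i) * Q i * f i) + (MvPolynomial.C (D / dg) * G) * fn1 :=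
    MvPolynomial.map_injective (Int.castRingHom ℚ) Int.cast_injective hmain
  refine ⟨D, MvPolynomial.C (D / dg) * G, hDpos.ne', ?_⟩
  have hmem : (∑ i, MvPolynomial.C (D / d i) * Q i * f i) ∈ Ideal.span (Set.range f) :=
    Ideal.sum_mem _ fun i _ =>
      Ideal.mul_mem_left _ _ (Ideal.subset_span (Set.mem_range_self i))
  rw [hZ, add_sub_cancel_right]
  exact hmem
end

section
/- Let f₁,…,fₙ ∈ ℤ[X₁,…,Xₙ] and let α = (α₁,…,αₙ) ∈ ℂⁿ be a common zero of f₁,…,fₙ. Let q ≥ 1 be a natural number, let p₁,…,pₙ be Gaussian integers, and set a := (p₁/q,…,pₙ/q) ∈ ℂⁿ. Define f_{n+1} := (qX₁ − p₁)(qX₁ − p̄₁), a polynomial with integer coefficients (here p̄₁ is the complex conjugate of p₁). Suppose b is a nonzero integer and g₁,…,g_{n+1} ∈ ℤ[X₁,…,Xₙ] satisfy the Bézout identity b = g₁f₁ + ⋯ + g_{n+1}f_{n+1}. Then: (1) 1 ≤ |g_{n+1}(α)| · q² · ‖a − α‖ · (|α₁| + |p₁|/q); and (2) if moreover ‖a −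 α‖ < ε for some real ε with 0 < ε ≤ 1, then ε^{−1} ≤ |g_{n+1}(α)| · (2‖α‖ + 1) · q². -/
/-- The norm on `ℂⁿ` associated with the standard hermitian inner product. -/
noncomputable def cnorm {n : ℕ} (x : Fin n → ℂ) : ℝ :=
  Real.sqrt (∑ k, ‖x k‖ ^ 2)

lemma cnorm_nonneg {n : ℕ} (x : Fin n → ℂ) : 0 ≤ cnorm x := Real.sqrt_nonneg _

lemma abs_le_cnorm {n : ℕ} (x : Fin n → ℂ) (k : Fin n) : ‖x k‖ ≤ cnorm x := by
  rw [cnorm, show ‖x k‖ = Real.sqrt (‖x k‖ ^ 2) by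
    rw [Real.sqrt_sq (norm_nonneg _)]]
  exact Real.sqrt_le_sqrt (Finset.single_le_sum (f := fun i => ‖x i‖ ^ 2)
    (fun i _ => sq_nonneg _) (Finset.mem_univ k))

/-- Key estimate for the Liouville bound.
Let `α ∈ ℂⁿ` be a common zero of `f₁, …, fₙ ∈ ℤ[X₁,…,Xₙ]`, let `q ≥ 1` be a
natural number, `p₁, …, pₙ` Gaussian integers, `a := (p₁/q, …, pₙ/q)`,
`f_{n+1} := (qX₁ − p₁)(qX₁ − p̄₁)`, and suppose `b ≠ 0` and
`b = g₁f₁ + ⋯ + g_{n+1}f_{n+1}` is a Bézout identity over `ℤ`.  Then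
(1) `1 ≤ |g_{n+1}(α)|·q²·‖a − α‖·(|α₁| + |p₁|/q)`, and
(2) if `‖a − α‖ < ε` with `0 < ε ≤ 1` then
`ε⁻¹ ≤ |g_{n+1}(α)|·(2‖α‖ + 1)·q²`. -/
theorem statement_2 (n : ℕ) (hn : 0 < n)
    (f : Fin n → MvPolynomial (Fin n) ℤ) (α : Fin n → ℂ)
    (hα : ∀ i, MvPolynomial.aeval α (f i) = 0)
    (q : ℕ) (hq : 1 ≤ q) (p : Fin n → ℂ)
    (hp : ∀ k, ∃ u v : ℤ, p k = (u : ℂ) + (v : ℂ) * Complex.I)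
    (a : Fin n → ℂ) (ha : ∀ k, a k = p k / (q : ℂ))
    (fn1 : MvPolynomial (Fin n) ℤ)
    (hfn1 : ∀ x : Fin n → ℂ,
      MvPolynomial.aeval x fn1 =
        ((q : ℂ) * x ⟨0, hn⟩ - p ⟨0, hn⟩) *
          ((q : ℂ) * x ⟨0, hn⟩ - starRingEnd ℂ (p ⟨0, hn⟩)))
    (b : ℤ) (hb : b ≠ 0) (g : Fin n → MvPolynomial (Fin n) ℤ)
    (gn1 : MvPolynomial (Fin n) ℤ)
    (hBezout : MvPolynomial.C b = ∑ i, g i * f i + gn1 * fn1) :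
    (1 : ℝ) ≤ ‖MvPolynomial.aeval α gn1‖ * (q : ℝ) ^ 2 *
        cnorm (a - α) * (‖α ⟨0, hn⟩‖ + ‖p ⟨0, hn⟩‖ / (q : ℝ)) ∧
    ∀ ε : ℝ, 0 < ε → ε ≤ 1 → cnorm (a - α) < ε →
      ε⁻¹ ≤ ‖MvPolynomial.aeval α gn1‖ * (2 * cnorm α + 1) * (q : ℝ) ^ 2 := by
  set i0 : Fin n := ⟨0, hn⟩
  have hq0 : (0:ℝ) < q := by exact_mod_cast hq
  have hqC : (q:ℂ) ≠ 0 := by exact_mod_cast hq0.ne'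
  set A : ℝ := ‖MvPolynomial.aeval α gn1‖ with hA
  set N : ℝ := cnorm (a - α) with hN
  have hA0 : 0 ≤ A := norm_nonneg _
  have hN0 : 0 ≤ N := cnorm_nonneg _
  -- Bezout at α
  have key : (b:ℂ) = MvPolynomial.aeval α gn1 * MvPolynomial.aeval α fn1 := by
    have h := congrArg (MvPolynomial.aeval α) hBezout
    simpa [hα, map_sum] using h
  have hb1 : (1:ℝ) ≤ ‖(b:ℂ)‖ := by
    rw [Complex.norm_intCast]
    exact_mod_cast Int.one_le_abs hb
  set T1 : ℝ := ‖(q:ℂ) * α i0 - p i0‖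
  set T2 : ℝ := ‖(q:ℂ) * α i0 - starRingEnd ℂ (p i0)‖
  have hkey : (1:ℝ) ≤ A * (T1 * T2) := by
    calc (1:ℝ) ≤ ‖(b:ℂ)‖ := hb1
    _ = A * (T1 * T2) := by rw [key, norm_mul, hfn1, norm_mul]
  have hT1 : T1 ≤ q * N := by
    have he : (q:ℂ) * α i0 - p i0 = -((q:ℂ) * ((a - α) i0)) := by
      simp only [Pi.sub_apply, ha i0]
      field_simp
      ring
    calc T1 = ‖(q:ℂ)‖ * ‖(a - α) i0‖ := by
          rw [show T1 = ‖(q:ℂ) * α i0 - p i0‖ from rfl, he, norm_neg, norm_mul]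
    _ ≤ q * N := by
          rw [Complex.norm_natCast]
          exact mul_le_mul_of_nonneg_left (abs_le_cnorm _ _) (by positivity)
  have hT2 : T2 ≤ q * (‖α i0‖ + ‖p i0‖ / q) := by
    calc T2 ≤ ‖(q:ℂ) * α i0‖ + ‖starRingEnd ℂ (p i0)‖ :=
          norm_sub_le _ _
    _ = q * ‖α i0‖ + ‖p i0‖ := by
          rw [norm_mul, Complex.norm_natCast, Complex.norm_conj]
    _ = q * (‖α i0‖ + ‖p i0‖ / q) := by field_simp
  have hT10 : 0 ≤ T1 := norm_nonneg _
  have hT20 : 0 ≤ T2 := norm_nonneg _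
  have hB0 : 0 ≤ ‖α i0‖ + ‖p i0‖ / q := by positivity
  have part1 : (1:ℝ) ≤ A * (q:ℝ)^2 * N * (‖α i0‖ + ‖p i0‖ / q) := by
    nlinarith [mul_le_mul hT1 hT2 hT20 (by positivity : (0:ℝ) ≤ (q:ℝ) * N),
      mul_le_mul_of_nonneg_left (mul_le_mul hT1 hT2 hT20 (by positivity : (0:ℝ) ≤ (q:ℝ) * N)) hA0]
  refine ⟨part1, fun ε hε hε1 hNε => ?_⟩
  -- bound |α₁| + |p₁|/q ≤ 2‖α‖ + 1
  have hpq : ‖p i0‖ / q = ‖a i0‖ := by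
    rw [ha i0, norm_div, Complex.norm_natCast]
  have haα : ‖a i0‖ ≤ ‖α i0‖ + N := by
    calc ‖a i0‖ = ‖α i0 + (a i0 - α i0)‖ := by ring_nf
    _ ≤ ‖α i0‖ + ‖a i0 - α i0‖ := norm_add_le _ _
    _ ≤ ‖α i0‖ + N := by
          have : ‖(a - α) i0‖ ≤ N := abs_le_cnorm _ _
          simpa [Pi.sub_apply] using this
  have hα1 : ‖α i0‖ ≤ cnorm α := abs_le_cnorm _ _
  have hBle : ‖α i0‖ + ‖p i0‖ / q ≤ 2 * cnorm α + 1 := by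
    rw [hpq]
    nlinarith
  set M : ℝ := A * (2 * cnorm α + 1) * (q:ℝ)^2 with hM
  have hM0 : 0 ≤ M := by
    have hc := cnorm_nonneg α
    have : 0 ≤ A * (2 * cnorm α + 1) := mul_nonneg hA0 (by linarith)
    rw [hM]; positivity
  have h1MN : (1:ℝ) ≤ M * N := by
    calc (1:ℝ) ≤ A * (q:ℝ)^2 * N * (‖α i0‖ + ‖p i0‖ / q) := part1
    _ ≤ A * (q:ℝ)^2 * N * (2 * cnorm α + 1) := by
          exact mul_le_mul_of_nonneg_left hBle (by positivity)
    _ = M * N := by ring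
  have hNpos : 0 < N := by
    by_contra h
    push_neg at h
    nlinarith
  have hMpos : 0 < M := by nlinarith
  rw [inv_eq_one_div, div_le_iff₀ hε]
  calc (1:ℝ) ≤ M * N := h1MN
  _ ≤ M * ε := mul_le_mul_of_nonneg_left hNε.le hM0
  _ = M * ε := rfl
end

section
/- There exists a constant C > 0 with the following property. Let n, d ≥ 1, h ≥ 1 and η ≥ 1 be natural numbers, and let f₁,…,fₙ ∈ ℤ[X₁,…,Xₙ] be polynomials of degree at most d, all of whose coefficients have absolute value at most 2^h, forming a regular sequence in ℚ[X₁,…,Xₙ] such that each ideal (f₁,…,f_i) of ℚ[X₁,…,Xₙ], 1 ≤ i ≤ n, is radical, and such that their common zero set V ⊂ ℂⁿ is finite of cardinality δ ≥ 1 with V ∩ ℚ(i)ⁿ = ∅. Assume the system admits a geometric solution of height at most η: there exist integers λ₁,…,λₙ, a polynomial q_u ∈ ℤ[T] of degree δ, nonzero integers ρ₁,…,ρₙ and polynomials v₁,…,vₙ ∈ ℤ[T] of degree strictly less than δ, where all the integers λ_i, ρ_i and all coefficients of q_u and of the v_i have absolute value at most 2^η, such that with U := λ₁X₁ + ⋯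 + λₙXₙ the ideal (f₁,…,fₙ) of ℚ[X₁,…,Xₙ] equals (q_u(U), ρ₁X₁ − v₁(U), …, ρₙXₙ − vₙ(U)). Let ε be a real number with 0 < ε ≤ 1, let q ≥ 1 be a natural number and p₁,…,pₙ Gaussian integers, set a := (p₁/q,…,pₙ/q) ∈ ℂⁿ, and suppose there exists α ∈ V with ‖a − α‖ < ε. Then (−log₂ ε)/(n·d·δ)^C − (h + η) ≤ log₂ q. -/
/-- The complex absolute value, as an absolute value. -/
noncomputable def Complex.abs : AbsoluteValue ℂ ℝ := NormedField.toAbsoluteValue ℂ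

lemma Complex.abs_apply (z : ℂ) : Complex.abs z = Real.sqrt (Complex.normSq z) :=
  Complex.norm_def z

lemma Complex.abs_intCast (m : ℤ) : Complex.abs (m : ℂ) = |(m : ℝ)| :=
  Complex.norm_intCast m

lemma Complex.abs_natCast (m : ℕ) : Complex.abs (m : ℂ) = (m : ℝ) :=
  Complex.norm_natCast m

lemma abs_le_cnorm_s6 {n : ℕ} (z : Fin n → ℂ) (i : Fin n) : Complex.abs (z i) ≤ cnorm z := by
  have h1 : Complex.abs (z i) ^ 2 ≤ ∑ k, Complex.abs (z k) ^ 2 :=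
    Finset.single_le_sum (f := fun k => Complex.abs (z k) ^ 2)
      (fun k _ => sq_nonneg _) (Finset.mem_univ i)
  calc Complex.abs (z i) = Real.sqrt (Complex.abs (z i) ^ 2) :=
        (Real.sqrt_sq (Complex.abs.nonneg _)).symm
    _ ≤ cnorm z := Real.sqrt_le_sqrt h1

/-- The subring of Gaussian rationals in `ℂ`. -/
def gaussQ : Subring ℂ where
  carrier := {z : ℂ | ∃ u w : ℚ, z = (u : ℂ) + (w : ℂ) * Complex.I}
  zero_mem' := ⟨0, 0, by simp⟩
  one_mem' := ⟨1, 0, by simp⟩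
  add_mem' := by rintro a b ⟨u, w, rfl⟩ ⟨u', w', rfl⟩; exact ⟨u + u', w + w', by push_cast; ring⟩
  neg_mem' := by rintro a ⟨u, w, rfl⟩; exact ⟨-u, -w, by push_cast; ring⟩
  mul_mem' := by
    rintro a b ⟨u, w, rfl⟩ ⟨u', w', rfl⟩
    exact ⟨u * u' - w * w', u * w' + w * u', by
      push_cast
      linear_combination (w : ℂ) * (w' : ℂ) * Complex.I_mul_I⟩

/-- The subring of Gaussian integers in `ℂ`. -/
def gaussZ : Subring ℂ where
  carrier := {z : ℂ | ∃ u w : ℤ, z = (u : ℂ) + (w : ℂ) * Complex.I}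
  zero_mem' := ⟨0, 0, by simp⟩
  one_mem' := ⟨1, 0, by simp⟩
  add_mem' := by rintro a b ⟨u, w, rfl⟩ ⟨u', w', rfl⟩; exact ⟨u + u', w + w', by push_cast; ring⟩
  neg_mem' := by rintro a ⟨u, w, rfl⟩; exact ⟨-u, -w, by push_cast; ring⟩
  mul_mem' := by
    rintro a b ⟨u, w, rfl⟩ ⟨u', w', rfl⟩
    exact ⟨u * u' - w * w', u * w' + w * u', by
      push_cast
      linear_combination (w : ℂ) * (w' : ℂ) * Complex.I_mul_I⟩

lemma gaussQ_div_rat {z : ℂ} (hz : z ∈ gaussQ) (r : ℚ) : z / (r : ℂ) ∈ gaussQ := by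
  obtain ⟨u, w, rfl⟩ := hz
  exact ⟨u / r, w / r, by push_cast; ring⟩

lemma eval_mem_subring (s : Subring ℂ) (P : Polynomial ℤ) {z : ℂ} (hz : z ∈ s) :
    (P.map (Int.castRingHom ℂ)).eval z ∈ s := by
  rw [Polynomial.eval_eq_sum_range]
  refine Subring.sum_mem s fun j _ => ?_
  rw [Polynomial.coeff_map]
  exact Subring.mul_mem s (intCast_mem s _) (Subring.pow_mem s hz j)

lemma one_le_abs_gaussZ {z : ℂ} (hz : z ∈ gaussZ) (h0 : z ≠ 0) : 1 ≤ Complex.abs z := by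
  obtain ⟨a, b, rfl⟩ := hz
  have hab : a ≠ 0 ∨ b ≠ 0 := by
    by_contra h
    push_neg at h
    exact h0 (by simp [h.1, h.2])
  have hsq : Complex.normSq ((a : ℂ) + (b : ℂ) * Complex.I) = (a : ℝ) ^ 2 + (b : ℝ) ^ 2 := by
    have := Complex.normSq_add_mul_I (a : ℝ) (b : ℝ)
    simpa using this
  have h1 : (1 : ℝ) ≤ (a : ℝ) ^ 2 + (b : ℝ) ^ 2 := by
    rcases hab with ha | hb
    · have : (1 : ℤ) ≤ a ^ 2 := by
        have := Int.one_le_abs ha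
        nlinarith [sq_abs a]
      nlinarith [sq_nonneg (b : ℝ), (by exact_mod_cast this : (1:ℝ) ≤ (a:ℝ)^2)]
    · have : (1 : ℤ) ≤ b ^ 2 := by
        have := Int.one_le_abs hb
        nlinarith [sq_abs b]
      nlinarith [sq_nonneg (a : ℝ), (by exact_mod_cast this : (1:ℝ) ≤ (b:ℝ)^2)]
  calc (1 : ℝ) = Real.sqrt 1 := Real.sqrt_one.symm
    _ ≤ Real.sqrt (Complex.normSq ((a : ℂ) + (b : ℂ) * Complex.I)) := by
        rw [hsq]; exact Real.sqrt_le_sqrt h1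
    _ = Complex.abs _ := (Complex.abs_apply _).symm

lemma abs_pow_sub_pow_le' (u t : ℂ) (R : ℝ) (hR1 : 1 ≤ R)
    (hu : Complex.abs u ≤ R) (ht : Complex.abs t ≤ R) (j : ℕ) :
    Complex.abs (u ^ j - t ^ j) ≤ (j : ℝ) * R ^ j * Complex.abs (u - t) := by
  have hR0 : (0 : ℝ) ≤ R := le_trans zero_le_one hR1
  induction j with
  | zero => simp
  | succ j ih =>
    have key : u ^ (j + 1) - t ^ (j + 1) = u ^ j * (u - t) + t * (u ^ j - t ^ j) := by ring
    have h1 : Complex.abs (u ^ (j + 1) - t ^ (j + 1)) ≤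
        R ^ j * Complex.abs (u - t) + R * ((j : ℝ) * R ^ j * Complex.abs (u - t)) := by
      rw [key]
      refine le_trans (Complex.abs.add_le _ _) ?_
      have e1 : Complex.abs (u ^ j * (u - t)) ≤ R ^ j * Complex.abs (u - t) := by
        rw [map_mul, map_pow]
        exact mul_le_mul_of_nonneg_right (pow_le_pow_left₀ (Complex.abs.nonneg _) hu j)
          (Complex.abs.nonneg _)
      have e2 : Complex.abs (t * (u ^ j - t ^ j)) ≤
          R * ((j : ℝ) * R ^ j * Complex.abs (u - t)) := by
        rw [map_mul]
        exact mul_le_mul ht ih (Complex.abs.nonneg _) hR0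
      linarith
    have h2 : R ^ j ≤ R ^ (j + 1) := pow_le_pow_right₀ hR1 (by omega)
    have h3 : (0 : ℝ) ≤ Complex.abs (u - t) := Complex.abs.nonneg _
    have h4 : R * ((j : ℝ) * R ^ j * Complex.abs (u - t)) =
        (j : ℝ) * R ^ (j + 1) * Complex.abs (u - t) := by ring
    have h5 : R ^ j * Complex.abs (u - t) ≤ R ^ (j + 1) * Complex.abs (u - t) :=
      mul_le_mul_of_nonneg_right h2 h3
    push_cast
    nlinarith [h1, h4, h5]

set_option maxHeartbeats 2000000 in
/-- Multivariate Liouville estimate.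
There is a universal constant `C > 0` such that for any smooth regular
sequence `f₁, …, fₙ ∈ ℤ[X₁,…,Xₙ]` of degree at most `d` and height at most
`h`, whose zero set `V ⊂ ℂⁿ` is finite of cardinality `δ ≥ 1` and avoids
`ℚ(i)ⁿ`, admitting a geometric solution of height at most `η`, and for any
rational approximation `a = (p₁/q, …, pₙ/q)` with `‖a − α‖ < ε ≤ 1` for some
`α ∈ V`, one has `(−log₂ ε)/(n·d·δ)^C − (h + η) ≤ log₂ q`. -/
theorem statement_6 :
    ∃ C : ℕ, 0 < C ∧
      ∀ (n d h η δ : ℕ), 1 ≤ n → 1 ≤ d → 1 ≤ h → 1 ≤ η → 1 ≤ δ →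
      ∀ f : Fin n → MvPolynomial (Fin n) ℤ,
      -- degrees at most `d`:
      (∀ i, (f i).totalDegree ≤ d) →
      -- heights at most `h`:
      (∀ i m, |MvPolynomial.coeff m (f i)| ≤ 2 ^ h) →
      -- `f₁, …, fₙ` is a regular sequence in `ℚ[X₁,…,Xₙ]`:
      (∀ i : Fin n, ∀ g : MvPolynomial (Fin n) ℚ,
        g * MvPolynomial.map (Int.castRingHom ℚ) (f i) ∈
          Ideal.span ((fun j : Fin n => MvPolynomial.map (Int.castRingHom ℚ) (f j)) ''
            {j | j < i}) →
        g ∈ Ideal.span ((fun j : Fin n => MvPolynomial.map (Int.castRingHom ℚ) (f j)) ''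
            {j | j < i})) →
      -- each ideal `(f₁, …, f_i)` of `ℚ[X₁,…,Xₙ]` is radical:
      (∀ i : Fin n,
        (Ideal.span ((fun j : Fin n => MvPolynomial.map (Int.castRingHom ℚ) (f j)) ''
          {j | j ≤ i})).IsRadical) →
      -- the common zero set `V` is finite of cardinality `δ`:
      {x : Fin n → ℂ | ∀ i, MvPolynomial.aeval x (f i) = 0}.Finite →
      {x : Fin n → ℂ | ∀ i, MvPolynomial.aeval x (f i) = 0}.ncard = δ →
      -- `V ∩ ℚ(i)ⁿ = ∅`:
      (∀ x ∈ {x : Fin n → ℂ | ∀ i, MvPolynomial.aeval x (f i) = 0},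
        ¬ ∀ k, ∃ u w : ℚ, x k = (u : ℂ) + (w : ℂ) * Complex.I) →
      -- geometric solution of height at most `η`:
      ∀ (lam ρ : Fin n → ℤ) (qu : Polynomial ℤ) (v : Fin n → Polynomial ℤ),
      (∀ i, ρ i ≠ 0) →
      qu.natDegree = δ →
      (∀ i, (v i).natDegree < δ) →
      (∀ i, |lam i| ≤ 2 ^ η) →
      (∀ i, |ρ i| ≤ 2 ^ η) →
      (∀ j, |qu.coeff j| ≤ 2 ^ η) →
      (∀ i j, |(v i).coeff j| ≤ 2 ^ η) →
      Ideal.span (Set.range fun i => MvPolynomial.map (Int.castRingHom ℚ) (f i)) =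
        Ideal.span
          ({Polynomial.aeval
              (∑ i, MvPolynomial.C ((lam i : ℚ)) * MvPolynomial.X i)
              (Polynomial.map (Int.castRingHom ℚ) qu)} ∪
            Set.range fun i =>
              MvPolynomial.C ((ρ i : ℚ)) * MvPolynomial.X i -
                Polynomial.aeval
                  (∑ j, MvPolynomial.C ((lam j : ℚ)) * MvPolynomial.X j)
                  (Polynomial.map (Int.castRingHom ℚ) (v i))) →
      -- rational approximation data:
      ∀ ε : ℝ, 0 < ε → ε ≤ 1 →
      ∀ q : ℕ, 1 ≤ q →
      ∀ p : Fin n → ℂ, (∀ k, ∃ u w : ℤ, p k = (u : ℂ) + (w : ℂ) * Complex.I) →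
      (∃ α ∈ {x : Fin n → ℂ | ∀ i, MvPolynomial.aeval x (f i) = 0},
        cnorm ((fun k => p k / (q : ℂ)) - α) < ε) →
      (-Real.logb 2 ε) / ((n * d * δ : ℕ) : ℝ) ^ C - ((h : ℝ) + (η : ℝ)) ≤
        Real.logb 2 (q : ℝ) := by
  refine ⟨7, by norm_num, ?_⟩
  intro n d h η δ hn hd hh hη hδ f hdeg hht hreg hrad hfin hcard hnopt
    lam ρ qu v hρ hqudeg hvdeg hlam hρb hqub hvb hIdeal ε hε0 hε1 q hq p hp happrox
  obtain ⟨α, hαV, hαε⟩ := happrox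
  -- Notation
  set V : Set (Fin n → ℂ) := {x : Fin n → ℂ | ∀ i, MvPolynomial.aeval x (f i) = 0} with hVdef
  set Q : Polynomial ℂ := qu.map (Int.castRingHom ℂ) with hQdef
  set W : Fin n → Polynomial ℂ := fun k => (v k).map (Int.castRingHom ℂ) with hWdef
  set U : (Fin n → ℂ) → ℂ := fun x => ∑ i, ((lam i : ℚ) : ℂ) * x i with hUdef
  -- basic nonvanishing
  have hqune : qu ≠ 0 := by
    intro h0
    rw [h0, Polynomial.natDegree_zero] at hqudeg
    omega
  have hQne : Q ≠ 0 := by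
    rw [hQdef, Ne, Polynomial.map_eq_zero_iff (f := Int.castRingHom ℂ) Int.cast_injective]
    exact hqune
  have hQdeg : Q.natDegree = δ := by
    rw [hQdef, Polynomial.natDegree_map_eq_of_injective (f := Int.castRingHom ℂ)
      Int.cast_injective]
    exact hqudeg
  -- Step 1: every point of V kills the geometric-resolution generators
  have hvanish : ∀ x ∈ V, Q.eval (U x) = 0 ∧ ∀ k, ((ρ k : ℚ) : ℂ) * x k = (W k).eval (U x) := by
    intro x hx
    have hker : ∀ P ∈ Ideal.span (Set.range fun i =>
        MvPolynomial.map (Int.castRingHom ℚ) (f i)),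
        MvPolynomial.aeval (R := ℚ) x P = 0 := by
      intro P hP
      have hle : Ideal.span (Set.range fun i => MvPolynomial.map (Int.castRingHom ℚ) (f i)) ≤
          RingHom.ker (MvPolynomial.aeval (R := ℚ) x).toRingHom := by
        rw [Ideal.span_le]
        rintro _ ⟨i, rfl⟩
        have : MvPolynomial.aeval (R := ℚ) x (MvPolynomial.map (Int.castRingHom ℚ) (f i)) = 0 := by
          rw [← algebraMap_int_eq, MvPolynomial.aeval_map_algebraMap]
          exact hx i
        exact this
      exact hle hP
    have hLx : MvPolynomial.aeval (R := ℚ) x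
        (∑ i, MvPolynomial.C ((lam i : ℚ)) * MvPolynomial.X i) = U x := by
      rw [map_sum]
      refine Finset.sum_congr rfl fun i _ => ?_
      rw [map_mul, MvPolynomial.aeval_C, MvPolynomial.aeval_X, eq_ratCast]
    constructor
    · have hmem : (Polynomial.aeval
          (∑ i, MvPolynomial.C ((lam i : ℚ)) * MvPolynomial.X i)
          (Polynomial.map (Int.castRingHom ℚ) qu)) ∈
          Ideal.span (Set.range fun i => MvPolynomial.map (Int.castRingHom ℚ) (f i)) := by
        rw [hIdeal]
        exact Ideal.subset_span (Set.mem_union_left _ rfl)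
      have h0 := hker _ hmem
      rw [← Polynomial.aeval_algHom_apply, hLx, ← algebraMap_int_eq,
        Polynomial.aeval_map_algebraMap, Polynomial.aeval_def,
        ← Polynomial.eval_map, algebraMap_int_eq] at h0
      exact h0
    · intro k
      have hmem : (MvPolynomial.C ((ρ k : ℚ)) * MvPolynomial.X k -
          Polynomial.aeval (∑ j, MvPolynomial.C ((lam j : ℚ)) * MvPolynomial.X j)
            (Polynomial.map (Int.castRingHom ℚ) (v k))) ∈
          Ideal.span (Set.range fun i => MvPolynomial.map (Int.castRingHom ℚ) (f i)) := by
        rw [hIdeal]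
        exact Ideal.subset_span (Set.mem_union_right _ ⟨k, rfl⟩)
      have h0 := hker _ hmem
      rw [map_sub, map_mul, MvPolynomial.aeval_C, MvPolynomial.aeval_X, eq_ratCast,
        ← Polynomial.aeval_algHom_apply, hLx, ← algebraMap_int_eq,
        Polynomial.aeval_map_algebraMap, Polynomial.aeval_def,
        ← Polynomial.eval_map, algebraMap_int_eq, sub_eq_zero] at h0
      exact h0
  obtain ⟨hQα, hWα⟩ := hvanish α hαV
  have hρC : ∀ k, ((ρ k : ℚ) : ℂ) ≠ 0 := by
    intro k
    simp only [Ne, Rat.cast_eq_zero, Int.cast_eq_zero]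
    exact_mod_cast hρ k
  -- injectivity of `U` on `V`
  have hUinj : Set.InjOn U V := by
    intro x hx y hy hxy
    obtain ⟨-, hWx⟩ := hvanish x hx
    obtain ⟨-, hWy⟩ := hvanish y hy
    funext k
    have h1 : ((ρ k : ℚ) : ℂ) * x k = ((ρ k : ℚ) : ℂ) * y k := by
      rw [hWx k, hWy k, hxy]
    exact mul_left_cancel₀ (hρC k) h1
  -- no root of `Q` is a Gaussian rational
  have hnoroot : ∀ z : ℂ, z ∈ gaussQ → Q.eval z ≠ 0 := by
    intro z hz h0
    have hVF : hfin.toFinset.card = δ := by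
      rw [← Set.ncard_eq_toFinset_card _ hfin]
      exact hcard
    have himg : hfin.toFinset.image U ⊆ Q.roots.toFinset := by
      intro z' hz'
      obtain ⟨x, hxVF, rfl⟩ := Finset.mem_image.mp hz'
      rw [Multiset.mem_toFinset, Polynomial.mem_roots']
      exact ⟨hQne, (hvanish x (hfin.mem_toFinset.mp hxVF)).1⟩
    have hcardi : (hfin.toFinset.image U).card = δ := by
      rw [Finset.card_image_of_injOn (fun x hx y hy => hUinj (hfin.mem_toFinset.mp hx)
        (hfin.mem_toFinset.mp hy)), hVF]
    have hle : Q.roots.toFinset.card ≤ δ :=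
      le_trans (Multiset.toFinset_card_le _) (le_trans (Polynomial.card_roots' Q) hQdeg.le)
    have heq : hfin.toFinset.image U = Q.roots.toFinset :=
      Finset.eq_of_subset_of_card_le himg (by rw [hcardi]; exact hle)
    have hzmem : z ∈ Q.roots.toFinset := by
      rw [Multiset.mem_toFinset, Polynomial.mem_roots']
      exact ⟨hQne, h0⟩
    rw [← heq] at hzmem
    obtain ⟨x, hxVF, hUx⟩ := Finset.mem_image.mp hzmem
    have hxV : x ∈ V := hfin.mem_toFinset.mp hxVF
    refine hnopt x hxV fun k => ?_
    have hxk : x k = (W k).eval z / ((ρ k : ℚ) : ℂ) := by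
      rw [eq_div_iff (hρC k), mul_comm, ← hUx]
      exact ((hvanish x hxV).2 k)
    have : x k ∈ gaussQ := by
      rw [hxk]
      exact gaussQ_div_rat (eval_mem_subring gaussQ (v k) hz) ((ρ k : ℚ))
    exact this
  -- the case δ = 1 is impossible
  rcases eq_or_lt_of_le hδ with hδ1 | hδ2
  · exfalso
    refine hnoroot (U α) ?_ hQα
    have hdeg1 : Q.natDegree = 1 := by rw [hQdeg, ← hδ1]
    have hc1 : (qu.coeff 1 : ℚ) ≠ 0 := by
      have : qu.coeff 1 ≠ 0 := by
        have := Polynomial.leadingCoeff_ne_zero.mpr hqune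
        rwa [Polynomial.leadingCoeff, hqudeg, ← hδ1] at this
      exact_mod_cast this
    have heval := hQα
    rw [Polynomial.eval_eq_sum_range, hdeg1] at heval
    simp only [hQdef, Finset.sum_range_succ, Finset.sum_range_zero, Polynomial.coeff_map,
      pow_zero, pow_one, zero_add, eq_intCast] at heval
    have hc1C : ((qu.coeff 1 : ℤ) : ℂ) ≠ 0 := by exact_mod_cast hc1
    have hsol : U α = -((qu.coeff 0 : ℤ) : ℂ) / ((qu.coeff 1 : ℤ) : ℂ) := by
      field_simp
      linear_combination heval
    refine ⟨(-(qu.coeff 0 : ℚ) / (qu.coeff 1 : ℚ)), 0, ?_⟩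
    rw [hsol]
    push_cast
    ring
  -- quantitative case : δ ≥ 2
  set a : Fin n → ℂ := fun k => p k / (q : ℂ) with hadef
  set u : ℂ := U a with hudef
  set t : ℂ := U α with htdef
  set B : ℝ := (2 : ℝ) ^ η with hBdef
  set D : ℝ := Complex.abs (u - t) with hDdef
  have hB1 : (1 : ℝ) ≤ B := one_le_pow₀ one_le_two
  have hB0 : (0 : ℝ) ≤ B := zero_le_one.trans hB1
  have hqC : (q : ℂ) ≠ 0 := by
    simp only [Ne, Nat.cast_eq_zero]
    omega
  have hqR1 : (1 : ℝ) ≤ (q : ℝ) := by exact_mod_cast hq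
  have hintabs : ∀ m : ℤ, |m| ≤ 2 ^ η → Complex.abs ((m : ℚ) : ℂ) ≤ B := by
    intro m hm
    have h1 : ((m : ℚ) : ℂ) = (m : ℂ) := by push_cast; ring
    rw [h1, Complex.abs_intCast]
    calc |(m : ℝ)| = ((|m| : ℤ) : ℝ) := by push_cast; ring
      _ ≤ (((2:ℤ) ^ η : ℤ) : ℝ) := by exact_mod_cast hm
      _ = B := by push_cast; ring
  have habscoeff : ∀ j, Complex.abs (Q.coeff j) ≤ B := by
    intro j
    have h1 : Q.coeff j = ((qu.coeff j : ℚ) : ℂ) := by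
      rw [hQdef, Polynomial.coeff_map, eq_intCast]
      push_cast
      ring
    rw [h1]
    exact hintabs _ (hqub j)
  -- bound on |u - t|
  have hD : D ≤ (n : ℝ) * B * ε := by
    have hsub : u - t = ∑ i, ((lam i : ℚ) : ℂ) * (a i - α i) := by
      rw [hudef, htdef, hUdef]
      rw [← Finset.sum_sub_distrib]
      exact Finset.sum_congr rfl fun i _ => by ring
    calc D = Complex.abs (∑ i, ((lam i : ℚ) : ℂ) * (a i - α i)) := by rw [hDdef, hsub]
      _ ≤ ∑ i, Complex.abs (((lam i : ℚ) : ℂ) * (a i - α i)) :=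
          Complex.abs.sum_le _ _
      _ ≤ ∑ _i : Fin n, B * ε := by
          refine Finset.sum_le_sum fun i _ => ?_
          rw [map_mul]
          refine mul_le_mul (hintabs _ (hlam i)) ?_ (Complex.abs.nonneg _) hB0
          calc Complex.abs (a i - α i) = Complex.abs ((a - α) i) := by rw [Pi.sub_apply]
            _ ≤ cnorm (a - α) := abs_le_cnorm_s6 _ i
            _ ≤ ε := hαε.le
      _ = (n : ℝ) * B * ε := by
          rw [Finset.sum_const, Finset.card_univ, Fintype.card_fin]
          push_cast
          ring
  -- the root `t` is bounded
  have hlead : (1 : ℝ) ≤ Complex.abs (Q.coeff δ) := by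
    have h1 : Q.coeff δ = ((qu.coeff δ : ℤ) : ℂ) := by rw [hQdef, Polynomial.coeff_map]; rfl
    have h2 : qu.coeff δ ≠ 0 := by
      have := Polynomial.leadingCoeff_ne_zero.mpr hqune
      rwa [Polynomial.leadingCoeff, hqudeg] at this
    rw [h1, Complex.abs_intCast]
    have := Int.one_le_abs h2
    calc (1 : ℝ) = ((1 : ℤ) : ℝ) := by norm_num
      _ ≤ ((|qu.coeff δ| : ℤ) : ℝ) := by exact_mod_cast this
      _ = |(qu.coeff δ : ℝ)| := by push_cast; ring
  have hT : Complex.abs t ≤ (δ : ℝ) * B := by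
    rcases le_or_gt (Complex.abs t) 1 with h1 | h1
    · calc Complex.abs t ≤ 1 := h1
        _ ≤ (δ : ℝ) * B := by
            have : (1 : ℝ) ≤ (δ : ℝ) := by exact_mod_cast hδ
            nlinarith
    · obtain ⟨m, rfl⟩ : ∃ m, δ = m + 1 := ⟨δ - 1, by omega⟩
      have hsum := hQα
      rw [Polynomial.eval_eq_sum_range, hQdeg, Finset.sum_range_succ] at hsum
      have hneg : Q.coeff (m + 1) * t ^ (m + 1) = -∑ j ∈ Finset.range (m + 1),
          Q.coeff j * t ^ j := by linear_combination hsum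
      have hb1 : Complex.abs t ^ (m + 1) ≤ ((m : ℝ) + 1) * (B * Complex.abs t ^ m) := by
        calc Complex.abs t ^ (m + 1)
            = 1 * Complex.abs t ^ (m + 1) := (one_mul _).symm
          _ ≤ Complex.abs (Q.coeff (m + 1)) * Complex.abs t ^ (m + 1) :=
              mul_le_mul_of_nonneg_right hlead (by positivity)
          _ = Complex.abs (Q.coeff (m + 1) * t ^ (m + 1)) := by
              rw [map_mul, map_pow]
          _ = Complex.abs (∑ j ∈ Finset.range (m + 1), Q.coeff j * t ^ j) := by
              rw [hneg, AbsoluteValue.map_neg]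
          _ ≤ ∑ j ∈ Finset.range (m + 1), Complex.abs (Q.coeff j * t ^ j) :=
              Complex.abs.sum_le _ _
          _ ≤ ∑ _j ∈ Finset.range (m + 1), B * Complex.abs t ^ m := by
              refine Finset.sum_le_sum fun j hj => ?_
              rw [map_mul, map_pow]
              refine mul_le_mul (habscoeff j) ?_ (by positivity) hB0
              exact pow_le_pow_right₀ h1.le (by have := Finset.mem_range.mp hj; omega)
          _ = ((m : ℝ) + 1) * (B * Complex.abs t ^ m) := by
              rw [Finset.sum_const, Finset.card_range]
              push_cast
              ring
      have hb2 : Complex.abs t ^ (m + 1) = Complex.abs t * Complex.abs t ^ m := by ring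
      have hpos : (0 : ℝ) < Complex.abs t ^ m := by positivity
      have := hb1
      rw [hb2] at this
      push_cast
      nlinarith
  set R : ℝ := B * ((n : ℝ) + (δ : ℝ)) with hRdef
  have hn1 : (1 : ℝ) ≤ (n : ℝ) := by exact_mod_cast hn
  have hδ1R : (1 : ℝ) ≤ (δ : ℝ) := by exact_mod_cast hδ
  have hR1 : (1 : ℝ) ≤ R := by rw [hRdef]; nlinarith
  have hR0 : (0 : ℝ) ≤ R := zero_le_one.trans hR1
  have htR : Complex.abs t ≤ R := by
    rw [hRdef]
    nlinarith
  have huR : Complex.abs u ≤ R := by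
    have h1 : Complex.abs u ≤ Complex.abs t + D := by
      calc Complex.abs u = Complex.abs (t + (u - t)) := by ring_nf
        _ ≤ Complex.abs t + Complex.abs (u - t) := Complex.abs.add_le _ _
        _ = Complex.abs t + D := by rw [hDdef]
    have h2 : D ≤ (n : ℝ) * B := le_trans hD (by
      nlinarith [mul_le_mul_of_nonneg_left hε1 (show (0:ℝ) ≤ (n:ℝ) * B by positivity)])
    rw [hRdef]
    nlinarith
  -- upper bound for |Q.eval u|
  have hQu : Complex.abs (Q.eval u) ≤ ((δ : ℝ) + 1) * (B * ((δ : ℝ) * R ^ δ * D)) := by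
    have hdiff : Q.eval u = ∑ j ∈ Finset.range (δ + 1), Q.coeff j * (u ^ j - t ^ j) := by
      have h1 : Q.eval u - Q.eval t =
          ∑ j ∈ Finset.range (δ + 1), Q.coeff j * (u ^ j - t ^ j) := by
        rw [Polynomial.eval_eq_sum_range, Polynomial.eval_eq_sum_range, hQdeg,
          ← Finset.sum_sub_distrib]
        exact Finset.sum_congr rfl fun j _ => by ring
      rw [hQα, sub_zero] at h1
      exact h1
    calc Complex.abs (Q.eval u)
        ≤ ∑ j ∈ Finset.range (δ + 1), Complex.abs (Q.coeff j * (u ^ j - t ^ j)) := by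
          rw [hdiff]; exact Complex.abs.sum_le _ _
      _ ≤ ∑ _j ∈ Finset.range (δ + 1), B * ((δ : ℝ) * R ^ δ * D) := by
          refine Finset.sum_le_sum fun j hj => ?_
          rw [map_mul]
          refine mul_le_mul (habscoeff j) ?_ (Complex.abs.nonneg _) hB0
          have hjδ : j ≤ δ := by have := Finset.mem_range.mp hj; omega
          calc Complex.abs (u ^ j - t ^ j) ≤ (j : ℝ) * R ^ j * Complex.abs (u - t) :=
                abs_pow_sub_pow_le' u t R hR1 huR htR j
            _ ≤ (δ : ℝ) * R ^ δ * D := by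
                rw [hDdef]
                have hj2 : (j : ℝ) ≤ (δ : ℝ) := by exact_mod_cast hjδ
                have hj3 : R ^ j ≤ R ^ δ := pow_le_pow_right₀ hR1 hjδ
                have hc0 := Complex.abs.nonneg (u - t)
                have hRj : (0:ℝ) ≤ R ^ j := by positivity
                have h4 : (j : ℝ) * R ^ j ≤ (δ : ℝ) * R ^ δ :=
                  mul_le_mul hj2 hj3 hRj (by positivity)
                exact mul_le_mul_of_nonneg_right h4 hc0
      _ = ((δ : ℝ) + 1) * (B * ((δ : ℝ) * R ^ δ * D)) := by
          rw [Finset.sum_const, Finset.card_range]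
          push_cast
          ring
  -- `q^δ * Q.eval u` is a nonzero Gaussian integer
  set w : ℂ := ∑ i, ((lam i : ℚ) : ℂ) * p i with hwdef
  have hqu_eq : (q : ℂ) * u = w := by
    rw [hudef, hUdef, hwdef, Finset.mul_sum]
    refine Finset.sum_congr rfl fun i _ => ?_
    rw [hadef]
    field_simp
  have hwmem : w ∈ gaussZ := by
    rw [hwdef]
    refine Subring.sum_mem _ fun i _ => ?_
    refine Subring.mul_mem _ ?_ ?_
    · have h1 : ((lam i : ℚ) : ℂ) = ((lam i : ℤ) : ℂ) := by push_cast; ring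
      rw [h1]
      exact intCast_mem gaussZ _
    · obtain ⟨ui, wi, hui⟩ := hp i
      exact ⟨ui, wi, hui⟩
  have humem : u ∈ gaussQ := by
    rw [hudef, hUdef]
    refine Subring.sum_mem _ fun i _ => ?_
    have h1 : ((lam i : ℚ) : ℂ) * a i = (((lam i : ℚ) : ℂ) * p i) / (((q : ℚ)) : ℂ) := by
      rw [hadef]
      push_cast
      ring
    rw [h1]
    refine gaussQ_div_rat (Subring.mul_mem _ ⟨(lam i : ℚ), 0, by push_cast; ring⟩ ?_) _
    obtain ⟨ui, wi, hui⟩ := hp i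
    exact ⟨(ui : ℚ), (wi : ℚ), by push_cast; exact hui⟩
  have hQune : Q.eval u ≠ 0 := hnoroot u humem
  have hzmem : (q : ℂ) ^ δ * Q.eval u ∈ gaussZ := by
    have hz_eq : (q : ℂ) ^ δ * Q.eval u =
        ∑ j ∈ Finset.range (δ + 1), (qu.coeff j : ℂ) * ((q : ℂ) ^ (δ - j) * w ^ j) := by
      rw [Polynomial.eval_eq_sum_range, hQdeg, Finset.mul_sum]
      refine Finset.sum_congr rfl fun j hj => ?_
      have hjδ : j ≤ δ := by have := Finset.mem_range.mp hj; omega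
      have h1 : Q.coeff j = ((qu.coeff j : ℤ) : ℂ) := by rw [hQdef, Polynomial.coeff_map]; rfl
      rw [h1, ← hqu_eq, mul_pow, ← mul_assoc ((q:ℂ) ^ (δ - j)), ← pow_add,
        Nat.sub_add_cancel hjδ]
      ring
    rw [hz_eq]
    refine Subring.sum_mem _ fun j _ => ?_
    exact Subring.mul_mem _ (intCast_mem gaussZ _)
      (Subring.mul_mem _ (Subring.pow_mem _ (natCast_mem gaussZ q) _)
        (Subring.pow_mem _ hwmem _))
  have hzne : (q : ℂ) ^ δ * Q.eval u ≠ 0 := mul_ne_zero (pow_ne_zero _ hqC) hQune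
  have h1z : (1 : ℝ) ≤ (q : ℝ) ^ δ * Complex.abs (Q.eval u) := by
    have := one_le_abs_gaussZ hzmem hzne
    rwa [map_mul, map_pow, Complex.abs_natCast] at this
  -- putting the bounds together
  set E : ℕ := (δ + 1) + (η + (δ + (η + (n + δ)) * δ)) + (n + η) with hEdef
  have hfact : ∀ m : ℕ, (m : ℝ) ≤ 2 ^ m := by
    intro m
    exact_mod_cast (Nat.lt_two_pow_self (n := m)).le
  have hR2 : R ≤ (2 : ℝ) ^ (η + (n + δ)) := by
    have h1 : ((n : ℝ) + (δ : ℝ)) ≤ 2 ^ (n + δ) := by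
      have := hfact (n + δ)
      push_cast at this
      linarith
    calc R = B * ((n : ℝ) + (δ : ℝ)) := hRdef
      _ ≤ B * 2 ^ (n + δ) := by
          exact mul_le_mul_of_nonneg_left h1 hB0
      _ = (2 : ℝ) ^ (η + (n + δ)) := by rw [hBdef]; simp only [pow_add]; try ring
  have hKE : ((δ : ℝ) + 1) * (B * ((δ : ℝ) * R ^ δ)) * ((n : ℝ) * B) ≤ (2 : ℝ) ^ E := by
    have e1 : ((δ : ℝ) + 1) ≤ 2 ^ (δ + 1) := by
      have := hfact (δ + 1); push_cast at this; linarith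
    have e2 : (δ : ℝ) ≤ 2 ^ δ := hfact δ
    have e3 : (n : ℝ) ≤ 2 ^ n := hfact n
    have e4 : R ^ δ ≤ (2 : ℝ) ^ ((η + (n + δ)) * δ) := by
      rw [pow_mul]
      exact pow_le_pow_left₀ hR0 hR2 δ
    calc ((δ : ℝ) + 1) * (B * ((δ : ℝ) * R ^ δ)) * ((n : ℝ) * B)
        ≤ (2 ^ (δ + 1)) * ((2:ℝ) ^ η * ((2:ℝ) ^ δ * (2:ℝ) ^ ((η + (n + δ)) * δ))) *
          ((2:ℝ) ^ n * (2:ℝ) ^ η) := by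
          have hBe : B = (2:ℝ) ^ η := hBdef
          refine mul_le_mul (mul_le_mul e1 ?_ (by positivity) (by positivity)) ?_
            (by positivity) (by positivity)
          · rw [hBe]
            refine mul_le_mul_of_nonneg_left ?_ (by positivity)
            exact mul_le_mul e2 e4 (by positivity) (by positivity)
          · rw [hBe]
            exact mul_le_mul_of_nonneg_right e3 (by positivity)
      _ = (2 : ℝ) ^ E := by
          rw [hEdef]
          simp only [pow_add]
          try ring
  have hεlb : (1 : ℝ) ≤ (q : ℝ) ^ δ * ((2 : ℝ) ^ E * ε) := by
    have hs1 : Complex.abs (Q.eval u) ≤ (2 : ℝ) ^ E * ε := by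
      calc Complex.abs (Q.eval u) ≤ ((δ : ℝ) + 1) * (B * ((δ : ℝ) * R ^ δ * D)) := hQu
        _ ≤ ((δ : ℝ) + 1) * (B * ((δ : ℝ) * R ^ δ * ((n : ℝ) * B * ε))) := by
            have hin : (δ : ℝ) * R ^ δ * D ≤ (δ : ℝ) * R ^ δ * ((n : ℝ) * B * ε) :=
              mul_le_mul_of_nonneg_left hD (by positivity)
            have hin2 : B * ((δ : ℝ) * R ^ δ * D) ≤
                B * ((δ : ℝ) * R ^ δ * ((n : ℝ) * B * ε)) :=
              mul_le_mul_of_nonneg_left hin hB0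
            exact mul_le_mul_of_nonneg_left hin2 (by positivity)
        _ = ((δ : ℝ) + 1) * (B * ((δ : ℝ) * R ^ δ)) * ((n : ℝ) * B) * ε := by ring
        _ ≤ (2 : ℝ) ^ E * ε := mul_le_mul_of_nonneg_right hKE hε0.le
    calc (1 : ℝ) ≤ (q : ℝ) ^ δ * Complex.abs (Q.eval u) := h1z
      _ ≤ (q : ℝ) ^ δ * ((2 : ℝ) ^ E * ε) :=
          mul_le_mul_of_nonneg_left hs1 (by positivity)
  have hlog : -Real.logb 2 ε ≤ (δ : ℝ) * Real.logb 2 (q : ℝ) + (E : ℝ) := by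
    have hM : (0 : ℝ) < (q : ℝ) ^ δ * 2 ^ E := by positivity
    have hεl2 : 1 / ((q : ℝ) ^ δ * 2 ^ E) ≤ ε := by
      rw [div_le_iff₀ hM]
      calc (1:ℝ) ≤ (q : ℝ) ^ δ * ((2 : ℝ) ^ E * ε) := hεlb
        _ = ε * ((q : ℝ) ^ δ * 2 ^ E) := by ring
    have hmono := Real.logb_le_logb_of_le one_lt_two (by positivity) hεl2
    rw [one_div, Real.logb_inv, Real.logb_mul (by positivity) (by positivity),
      Real.logb_pow, Real.logb_pow, Real.logb_self_eq_one one_lt_two] at hmono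
    linarith
  -- final numeric comparison
  have hδm : δ ≤ n * δ := Nat.le_mul_of_pos_left δ hn
  have hnm : n ≤ n * δ := Nat.le_mul_of_pos_right n hδ
  have hm1 : 1 ≤ n * δ := le_trans hδ hδm
  have h2nδ : 2 ≤ n * δ := le_trans hδ2 hδm
  have hnat1 : δ ≤ (n * d * δ) ^ 7 := by
    calc δ ≤ n * d * δ := Nat.le_mul_of_pos_left δ (Nat.mul_pos hn hd)
      _ ≤ (n * d * δ) ^ 7 := Nat.le_self_pow (by norm_num) _
  have hnat2 : E ≤ (n * d * δ) ^ 7 * (h + η) := by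
    have hE32 : E ≤ 32 * (n * δ) ^ 2 * η := by
      have base : n * δ ≤ (n * δ) ^ 2 * η := by
        calc n * δ = (n * δ) * (1 * 1) := by ring
          _ ≤ (n * δ) * ((n * δ) * η) := Nat.mul_le_mul_left _ (Nat.mul_le_mul hm1 hη)
          _ = (n * δ) ^ 2 * η := by ring
      have baseη : η ≤ (n * δ) ^ 2 * η := by
        calc η = 1 * η := (one_mul η).symm
          _ ≤ (n * δ) ^ 2 * η := Nat.mul_le_mul_right η (Nat.one_le_pow _ _ hm1)
      have baseηm : η * (n * δ) ≤ (n * δ) ^ 2 * η := by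
        calc η * (n * δ) = (n * δ) * (1 * η) := by ring
          _ ≤ (n * δ) * ((n * δ) * η) := Nat.mul_le_mul_left _ (Nat.mul_le_mul hm1 le_rfl)
          _ = (n * δ) ^ 2 * η := by ring
      have basem2 : (n * δ) ^ 2 ≤ (n * δ) ^ 2 * η := Nat.le_mul_of_pos_right _ hη
      have base1 : 1 ≤ (n * δ) ^ 2 * η := le_trans hm1 base
      have hE' : E ≤ (n * δ + 1) + (η + (n * δ + (η + (n * δ + n * δ)) * (n * δ))) +
          (n * δ + η) := by
        rw [hEdef]
        gcongr <;> assumption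
      have hE'' : (n * δ + 1) + (η + (n * δ + (η + (n * δ + n * δ)) * (n * δ))) +
          (n * δ + η) = 3 * (n * δ) + 1 + 2 * η + η * (n * δ) + 2 * (n * δ) ^ 2 := by ring
      rw [hE''] at hE'
      linarith [base, baseη, baseηm, basem2, base1, hE']
    calc E ≤ 32 * (n * δ) ^ 2 * η := hE32
      _ ≤ (n * δ) ^ 7 * (h + η) := by
          refine Nat.mul_le_mul ?_ (Nat.le_add_left η h)
          calc 32 * (n * δ) ^ 2 = 2 ^ 5 * (n * δ) ^ 2 := by norm_num
            _ ≤ (n * δ) ^ 5 * (n * δ) ^ 2 :=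
                Nat.mul_le_mul_right _ (Nat.pow_le_pow_left h2nδ 5)
            _ = (n * δ) ^ 7 := by ring
      _ ≤ (n * d * δ) ^ 7 * (h + η) := by
          refine Nat.mul_le_mul_right _ (Nat.pow_le_pow_left ?_ 7)
          calc n * δ = n * 1 * δ := by ring
            _ ≤ n * d * δ := by
                exact Nat.mul_le_mul_right _ (Nat.mul_le_mul_left _ hd)
  have hA0 : (0 : ℝ) < ((n * d * δ : ℕ) : ℝ) ^ (7 : ℕ) := by
    have : (1 : ℕ) ≤ n * d * δ := Nat.mul_pos (Nat.mul_pos hn hd) hδ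
    have h1 : (1 : ℝ) ≤ ((n * d * δ : ℕ) : ℝ) := by exact_mod_cast this
    positivity
  have hAeq : ((n * d * δ : ℕ) : ℝ) ^ (7 : ℕ) = (((n * d * δ) ^ 7 : ℕ) : ℝ) := by push_cast; ring
  have hδA : (δ : ℝ) ≤ ((n * d * δ : ℕ) : ℝ) ^ (7 : ℕ) := by
    rw [hAeq]; exact_mod_cast hnat1
  have hEA : (E : ℝ) ≤ ((n * d * δ : ℕ) : ℝ) ^ (7 : ℕ) * ((h : ℝ) + (η : ℝ)) := by
    rw [hAeq]
    calc (E : ℝ) ≤ (((n * d * δ) ^ 7 * (h + η) : ℕ) : ℝ) := by exact_mod_cast hnat2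
      _ = (((n * d * δ) ^ 7 : ℕ) : ℝ) * ((h : ℝ) + (η : ℝ)) := by push_cast; ring
  have hlogq : 0 ≤ Real.logb 2 (q : ℝ) := Real.logb_nonneg one_lt_two hqR1
  rw [sub_le_iff_le_add, div_le_iff₀ hA0]
  have hδlog : (δ : ℝ) * Real.logb 2 (q : ℝ) ≤
      ((n * d * δ : ℕ) : ℝ) ^ (7 : ℕ) * Real.logb 2 (q : ℝ) :=
    mul_le_mul_of_nonneg_right hδA hlogq
  nlinarith [hlog, hδlog, hEA]
end

section
/- There exists a constant C > 0 with the following property. Let n, d ≥ 1, h ≥ 1 and η ≥ 1 be natural numbers, and let f₁,…,fₙ ∈ ℤ[X₁,…,Xₙ] be polynomials of degree at most d, all of whose coefficients have absolute value at most 2^h, forming a regular sequence in ℚ[X₁,…,Xₙ] such that each ideal (f₁,…,f_i) of ℚ[X₁,…,Xₙ], 1 ≤ i ≤ n, is radical, and such that their common zero set V ⊂ ℂⁿ is finite of cardinality δ ≥ 1 with V ∩ ℚ(i)ⁿ = ∅. Assume the system admits a geometric solution of height at most η: there exist integers λ₁,…,λₙ, a polynomial q_u ∈ ℤ[T] of degree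 δ, nonzero integers ρ₁,…,ρₙ and polynomials v₁,…,vₙ ∈ ℤ[T] of degree strictly less than δ, where all the integers λ_i, ρ_i and all coefficients of q_u and of the v_i have absolute value at most 2^η, such that with U := λ₁X₁ + ⋯ + λₙXₙ the ideal (f₁,…,fₙ) of ℚ[X₁,…,Xₙ] equals (q_u(U), ρ₁X₁ − v₁(U), …, ρₙXₙ − vₙ(U)). Let q ≥ 1 be a natural number and p₁,…,pₙ Gaussian integers, set a := (p₁/q,…,pₙ/q) ∈ ℂⁿ, and suppose there exists α ∈ V with ‖a − α‖ < 2^{−dⁿ}. Then dⁿ/(n·d·δ)^C − (h + η) ≤ log₂ q. -/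
/-- Gaussian rationals as a subring of ℂ. -/
def gaussianRat : Subring ℂ where
  carrier := {x | ∃ u w : ℚ, x = (u : ℂ) + (w : ℂ) * Complex.I}
  zero_mem' := ⟨0, 0, by simp⟩
  one_mem' := ⟨1, 0, by simp⟩
  add_mem' := by
    rintro a b ⟨u, w, rfl⟩ ⟨u', w', rfl⟩
    exact ⟨u + u', w + w', by push_cast; ring⟩
  neg_mem' := by
    rintro a ⟨u, w, rfl⟩
    exact ⟨-u, -w, by push_cast; ring⟩
  mul_mem' := by
    rintro a b ⟨u, w, rfl⟩ ⟨u', w', rfl⟩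
    refine ⟨u * u' - w * w', u * w' + w * u', ?_⟩
    have h : Complex.I ^ 2 = -1 := Complex.I_sq
    push_cast
    ring_nf
    rw [h]
    ring

/-- Gaussian integers as a subring of ℂ. -/
def gaussianInt : Subring ℂ where
  carrier := {x | ∃ u w : ℤ, x = (u : ℂ) + (w : ℂ) * Complex.I}
  zero_mem' := ⟨0, 0, by simp⟩
  one_mem' := ⟨1, 0, by simp⟩
  add_mem' := by
    rintro a b ⟨u, w, rfl⟩ ⟨u', w', rfl⟩
    exact ⟨u + u', w + w', by push_cast; ring⟩
  neg_mem' := by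
    rintro a ⟨u, w, rfl⟩
    exact ⟨-u, -w, by push_cast; ring⟩
  mul_mem' := by
    rintro a b ⟨u, w, rfl⟩ ⟨u', w', rfl⟩
    refine ⟨u * u' - w * w', u * w' + w * u', ?_⟩
    have h : Complex.I ^ 2 = -1 := Complex.I_sq
    push_cast
    ring_nf
    rw [h]
    ring

lemma aeval_mem_subring (S : Subring ℂ) (P : Polynomial ℤ) {x : ℂ} (hx : x ∈ S) :
    Polynomial.aeval x P ∈ S := by
  rw [Polynomial.aeval_eq_sum_range]
  exact Subring.sum_mem _ fun i _ => Subring.zsmul_mem _ (Subring.pow_mem _ hx i) _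

lemma gaussianInt_one_le_abs {z : ℂ} (hz : z ∈ gaussianInt) (h0 : z ≠ 0) :
    1 ≤ ‖z‖ := by
  obtain ⟨u, w, rfl⟩ := hz
  have h1 : ((u : ℂ) + (w : ℂ) * Complex.I) = ((u : ℝ) : ℂ) + ((w : ℝ) : ℂ) * Complex.I := by
    push_cast; ring
  have h2 : Complex.normSq ((u : ℂ) + (w : ℂ) * Complex.I) = (u : ℝ) ^ 2 + (w : ℝ) ^ 2 := by
    rw [h1, Complex.normSq_add_mul_I]
  have h3 : (1 : ℝ) ≤ (u : ℝ) ^ 2 + (w : ℝ) ^ 2 := by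
    have : u ≠ 0 ∨ w ≠ 0 := by
      by_contra hc
      push_neg at hc
      apply h0
      rw [hc.1, hc.2]; simp
    rcases this with hu | hw
    · have : 1 ≤ u ^ 2 := by nlinarith [Int.one_le_abs hu, sq_abs u, abs_nonneg u]
      have : (1 : ℝ) ≤ (u : ℝ) ^ 2 := by exact_mod_cast this
      nlinarith [sq_nonneg ((w : ℝ))]
    · have : 1 ≤ w ^ 2 := by nlinarith [Int.one_le_abs hw, sq_abs w, abs_nonneg w]
      have : (1 : ℝ) ≤ (w : ℝ) ^ 2 := by exact_mod_cast this
      nlinarith [sq_nonneg ((u : ℝ))]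
  have h4 : 1 ≤ ‖(u : ℂ) + (w : ℂ) * Complex.I‖ ^ 2 := by
    rw [Complex.sq_norm, h2]; exact h3
  nlinarith [norm_nonneg ((u : ℂ) + (w : ℂ) * Complex.I)]


lemma abs_intCast_le (c : ℤ) (η : ℕ) (h : |c| ≤ 2 ^ η) :
    ‖(c : ℂ)‖ ≤ 2 ^ η := by
  rw [Complex.norm_intCast]
  calc |(c : ℝ)| = ((|c| : ℤ) : ℝ) := by push_cast; norm_cast
  _ ≤ ((2 ^ η : ℤ) : ℝ) := by exact_mod_cast h
  _ = 2 ^ η := by push_cast; ring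

lemma two_le_two_pow_succ (η : ℕ) : (2 : ℝ) ≤ 2 ^ (η + 1) := by
  calc (2:ℝ) = 2 ^ 1 := (pow_one 2).symm
  _ ≤ 2 ^ (η + 1) := pow_le_pow_right₀ (by norm_num) (by omega)

/-- Cauchy-type root bound. -/
lemma aux_root_bound {P : Polynomial ℤ} {δ η : ℕ} (hδ : 1 ≤ δ) (hdeg : P.natDegree = δ)
    (hc : ∀ j, |P.coeff j| ≤ 2 ^ η) {u : ℂ} (hu : Polynomial.aeval u P = 0) :
    ‖u‖ ≤ 2 ^ (η + 1) := by
  by_contra hbig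
  push_neg at hbig
  set r := ‖u‖ with hr
  have hr2 : (2 : ℝ) ≤ r := le_trans (two_le_two_pow_succ η) (le_of_lt hbig)
  have hr1 : (1 : ℝ) < r := by linarith
  have hr0 : (0 : ℝ) < r := by linarith
  have hsum : (0 : ℂ) = ∑ j ∈ Finset.range (δ + 1), P.coeff j • u ^ j := by
    rw [← Polynomial.aeval_eq_sum_range' (n := δ + 1) (by omega : P.natDegree < δ + 1), hu]
  rw [Finset.sum_range_succ] at hsum
  have hlead : (P.coeff δ : ℂ) * u ^ δ = - ∑ j ∈ Finset.range δ, P.coeff j • u ^ j := by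
    rw [eq_neg_iff_add_eq_zero, ← zsmul_eq_mul]
    linear_combination -hsum
  have hP0 : P ≠ 0 := fun h0 => by simp [h0] at hdeg; omega
  have hne : P.coeff δ ≠ 0 := by
    rw [← hdeg]
    exact Polynomial.leadingCoeff_ne_zero.mpr hP0
  have hlead1 : (1 : ℝ) ≤ ‖(P.coeff δ : ℂ)‖ := by
    rw [Complex.norm_intCast]
    exact_mod_cast Int.one_le_abs hne
  -- geometric sum bound
  have hgeom : ∑ j ∈ Finset.range δ, r ^ j ≤ 2 * r ^ (δ - 1) := by
    have hδ1 : δ - 1 + 1 = δ := by omega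
    have hpow : r ^ δ = r ^ (δ - 1) * r := by rw [← pow_succ, hδ1]
    have hpos : (0:ℝ) < r ^ (δ - 1) := pow_pos hr0 _
    have := geom_sum_eq (ne_of_gt hr1) δ
    rw [this, div_le_iff₀ (by linarith)]
    nlinarith
  have hpow1 : (1:ℝ) ≤ r ^ (δ - 1) := one_le_pow₀ (by linarith)
  have hmain : r ^ δ ≤ 2 ^ η * (2 * r ^ (δ - 1)) := by
    calc r ^ δ ≤ ‖(P.coeff δ : ℂ)‖ * r ^ δ := by
          nlinarith [pow_pos hr0 δ]
    _ = ‖(P.coeff δ : ℂ) * u ^ δ‖ := by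
          rw [norm_mul, norm_pow]
    _ = ‖∑ j ∈ Finset.range δ, P.coeff j • u ^ j‖ := by rw [hlead, norm_neg]
    _ ≤ ∑ j ∈ Finset.range δ, ‖P.coeff j • u ^ j‖ := by
          exact norm_sum_le _ _
    _ ≤ ∑ j ∈ Finset.range δ, 2 ^ η * r ^ j := by
          apply Finset.sum_le_sum
          intro j hj
          rw [zsmul_eq_mul, norm_mul, norm_pow]
          exact mul_le_mul_of_nonneg_right (abs_intCast_le _ _ (hc j)) (pow_nonneg hr0.le j)
    _ = 2 ^ η * ∑ j ∈ Finset.range δ, r ^ j := by rw [Finset.mul_sum]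
    _ ≤ 2 ^ η * (2 * r ^ (δ - 1)) := by
          apply mul_le_mul_of_nonneg_left hgeom (by positivity)
  have hδ1 : δ - 1 + 1 = δ := by omega
  have hpow : r ^ δ = r ^ (δ - 1) * r := by rw [← pow_succ, hδ1]
  have hpos : (0:ℝ) < r ^ (δ - 1) := pow_pos hr0 _
  have : r ≤ 2 ^ (η + 1) := by
    rw [hpow] at hmain
    have h2 : (2:ℝ) ^ (η+1) = 2 ^ η * 2 := by rw [pow_succ]
    nlinarith
  linarith


lemma abs_intCast_le' (c : ℤ) (η : ℕ) (h : |c| ≤ 2 ^ η) :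
    ‖(c : ℂ)‖ ≤ 2 ^ η := by
  rw [Complex.norm_intCast]
  calc |(c : ℝ)| = ((|c| : ℤ) : ℝ) := by push_cast; norm_cast
  _ ≤ ((2 ^ η : ℤ) : ℝ) := by exact_mod_cast h
  _ = 2 ^ η := by push_cast; ring

lemma aux_pow_diff {b u : ℂ} {M : ℝ} (hM : 0 ≤ M)
    (hb : ‖b‖ ≤ M) (hu : ‖u‖ ≤ M) (j : ℕ) :
    ‖b ^ j - u ^ j‖ ≤ j * M ^ (j - 1) * ‖b - u‖ := by
  rw [← geom_sum₂_mul b u j, norm_mul]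
  apply mul_le_mul_of_nonneg_right _ (norm_nonneg _)
  calc ‖∑ i ∈ Finset.range j, b ^ i * u ^ (j - 1 - i)‖
      ≤ ∑ i ∈ Finset.range j, ‖b ^ i * u ^ (j - 1 - i)‖ :=
        norm_sum_le _ _
    _ ≤ ∑ i ∈ Finset.range j, M ^ (j - 1) := by
        apply Finset.sum_le_sum
        intro i hi
        rw [norm_mul, norm_pow, norm_pow]
        have hij : i + (j - 1 - i) = j - 1 := by
          have := Finset.mem_range.mp hi; omega
        calc ‖b‖ ^ i * ‖u‖ ^ (j - 1 - i)
            ≤ M ^ i * M ^ (j - 1 - i) := by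
              apply mul_le_mul (pow_le_pow_left₀ (norm_nonneg _) hb i)
                (pow_le_pow_left₀ (norm_nonneg _) hu _)
                (pow_nonneg (norm_nonneg _) _) (pow_nonneg hM i)
          _ = M ^ (j - 1) := by rw [← pow_add, hij]
    _ = j * M ^ (j - 1) := by
        rw [Finset.sum_const, Finset.card_range, nsmul_eq_mul]

lemma aux_eval_diff {P : Polynomial ℤ} {δ η : ℕ} (hdeg : P.natDegree < δ + 1)
    (hc : ∀ j, |P.coeff j| ≤ 2 ^ η) {b u : ℂ} {M : ℝ} (hM : 1 ≤ M)
    (hb : ‖b‖ ≤ M) (hu : ‖u‖ ≤ M) :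
    ‖Polynomial.aeval b P - Polynomial.aeval u P‖ ≤
      (δ + 1) * (δ * (2 ^ η * M ^ δ)) * ‖b - u‖ := by
  have hM0 : (0:ℝ) ≤ M := by linarith
  rw [Polynomial.aeval_eq_sum_range' hdeg b, Polynomial.aeval_eq_sum_range' hdeg u,
    ← Finset.sum_sub_distrib]
  calc ‖∑ j ∈ Finset.range (δ + 1), (P.coeff j • b ^ j - P.coeff j • u ^ j)‖
      ≤ ∑ j ∈ Finset.range (δ + 1), ‖P.coeff j • b ^ j - P.coeff j • u ^ j‖ :=
        norm_sum_le _ _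
    _ ≤ ∑ j ∈ Finset.range (δ + 1), δ * (2 ^ η * M ^ δ) * ‖b - u‖ := by
        apply Finset.sum_le_sum
        intro j hj
        have hj' : j ≤ δ := by have := Finset.mem_range.mp hj; omega
        have h1 : P.coeff j • b ^ j - P.coeff j • u ^ j
            = (P.coeff j : ℂ) * (b ^ j - u ^ j) := by
          rw [zsmul_eq_mul, zsmul_eq_mul]; ring
        rw [h1, norm_mul]
        calc ‖(P.coeff j : ℂ)‖ * ‖b ^ j - u ^ j‖
            ≤ 2 ^ η * (j * M ^ (j - 1) * ‖b - u‖) := by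
              apply mul_le_mul (abs_intCast_le' _ _ (hc j))
                (aux_pow_diff hM0 hb hu j) (norm_nonneg _) (by positivity)
          _ ≤ δ * (2 ^ η * M ^ δ) * ‖b - u‖ := by
              have h2 : (j:ℝ) ≤ δ := by exact_mod_cast hj'
              have h3 : M ^ (j - 1) ≤ M ^ δ := pow_le_pow_right₀ hM (by omega)
              have h4 : (0:ℝ) ≤ ‖b - u‖ := norm_nonneg _
              have h5 : (j:ℝ) * M ^ (j-1) ≤ δ * M ^ δ :=
                mul_le_mul h2 h3 (pow_nonneg hM0 _) (Nat.cast_nonneg δ)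
              calc (2:ℝ) ^ η * (j * M ^ (j-1) * ‖b - u‖)
                  = (j * M ^ (j-1)) * (2 ^ η * ‖b - u‖) := by ring
                _ ≤ ((δ:ℝ) * M ^ δ) * (2 ^ η * ‖b - u‖) :=
                    mul_le_mul_of_nonneg_right h5 (by positivity)
                _ = δ * (2 ^ η * M ^ δ) * ‖b - u‖ := by ring
    _ = (δ + 1) * (δ * (2 ^ η * M ^ δ)) * ‖b - u‖ := by
        rw [Finset.sum_const, Finset.card_range, nsmul_eq_mul]
        push_cast; ring


lemma aux_K_bound {n η δ : ℕ} (hn : 1 ≤ n) (hη : 1 ≤ η) (hδ : 1 ≤ δ) :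
    ((n + 2 * η + (n + η + 3) * δ : ℕ) : ℝ) ≤ 8 * (n:ℝ) * η * δ := by
  have hn' : (1:ℝ) ≤ n := by exact_mod_cast hn
  have hη' : (1:ℝ) ≤ η := by exact_mod_cast hη
  have hδ' : (1:ℝ) ≤ δ := by exact_mod_cast hδ
  have e1 : (1:ℝ) ≤ (η:ℝ) * δ := by nlinarith
  have e2 : (1:ℝ) ≤ (n:ℝ) * δ := by nlinarith
  have e3 : (1:ℝ) ≤ (n:ℝ) * η := by nlinarith
  push_cast
  nlinarith

set_option maxHeartbeats 4000000 in
/-- Exponential lower bound for the Bézout approximation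
level.  There is a universal constant `C > 0` such that for any smooth
regular sequence `f₁, …, fₙ ∈ ℤ[X₁,…,Xₙ]` of degree at most `d` and height
at most `h`, whose zero set `V ⊂ ℂⁿ` is finite of cardinality `δ ≥ 1` and
avoids `ℚ(i)ⁿ`, admitting a geometric solution of height at most `η`, and for
any rational approximation `a = (p₁/q, …, pₙ/q)` with `‖a − α‖ < 2^{−dⁿ}` for
some `α ∈ V`, one has `dⁿ/(n·d·δ)^C − (h + η) ≤ log₂ q`. -/
theorem statement_7 :
    ∃ C : ℕ, 0 < C ∧
      ∀ (n d h η δ : ℕ), 1 ≤ n → 1 ≤ d → 1 ≤ h → 1 ≤ η → 1 ≤ δ →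
      ∀ f : Fin n → MvPolynomial (Fin n) ℤ,
      -- degrees at most `d`:
      (∀ i, (f i).totalDegree ≤ d) →
      -- heights at most `h`:
      (∀ i m, |MvPolynomial.coeff m (f i)| ≤ 2 ^ h) →
      -- `f₁, …, fₙ` is a regular sequence in `ℚ[X₁,…,Xₙ]`:
      (∀ i : Fin n, ∀ g : MvPolynomial (Fin n) ℚ,
        g * MvPolynomial.map (Int.castRingHom ℚ) (f i) ∈
          Ideal.span ((fun j : Fin n => MvPolynomial.map (Int.castRingHom ℚ) (f j)) ''
            {j | j < i}) →
        g ∈ Ideal.span ((fun j : Fin n => MvPolynomial.map (Int.castRingHom ℚ) (f j)) ''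
            {j | j < i})) →
      -- each ideal `(f₁, …, f_i)` of `ℚ[X₁,…,Xₙ]` is radical:
      (∀ i : Fin n,
        (Ideal.span ((fun j : Fin n => MvPolynomial.map (Int.castRingHom ℚ) (f j)) ''
          {j | j ≤ i})).IsRadical) →
      -- the common zero set `V` is finite of cardinality `δ`:
      {x : Fin n → ℂ | ∀ i, MvPolynomial.aeval x (f i) = 0}.Finite →
      {x : Fin n → ℂ | ∀ i, MvPolynomial.aeval x (f i) = 0}.ncard = δ →
      -- `V ∩ ℚ(i)ⁿ = ∅`:
      (∀ x ∈ {x : Fin n → ℂ | ∀ i, MvPolynomial.aeval x (f i) = 0},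
        ¬ ∀ k, ∃ u w : ℚ, x k = (u : ℂ) + (w : ℂ) * Complex.I) →
      -- geometric solution of height at most `η`:
      ∀ (lam ρ : Fin n → ℤ) (qu : Polynomial ℤ) (v : Fin n → Polynomial ℤ),
      (∀ i, ρ i ≠ 0) →
      qu.natDegree = δ →
      (∀ i, (v i).natDegree < δ) →
      (∀ i, |lam i| ≤ 2 ^ η) →
      (∀ i, |ρ i| ≤ 2 ^ η) →
      (∀ j, |qu.coeff j| ≤ 2 ^ η) →
      (∀ i j, |(v i).coeff j| ≤ 2 ^ η) →
      Ideal.span (Set.range fun i => MvPolynomial.map (Int.castRingHom ℚ) (f i)) =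
        Ideal.span
          ({Polynomial.aeval
              (∑ i, MvPolynomial.C ((lam i : ℚ)) * MvPolynomial.X i)
              (Polynomial.map (Int.castRingHom ℚ) qu)} ∪
            Set.range fun i =>
              MvPolynomial.C ((ρ i : ℚ)) * MvPolynomial.X i -
                Polynomial.aeval
                  (∑ j, MvPolynomial.C ((lam j : ℚ)) * MvPolynomial.X j)
                  (Polynomial.map (Int.castRingHom ℚ) (v i))) →
      -- rational approximation data:
      ∀ q : ℕ, 1 ≤ q →
      ∀ p : Fin n → ℂ, (∀ k, ∃ u w : ℤ, p k = (u : ℂ) + (w : ℂ) * Complex.I) →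
      (∃ α ∈ {x : Fin n → ℂ | ∀ i, MvPolynomial.aeval x (f i) = 0},
        cnorm ((fun k => p k / (q : ℂ)) - α) < ((2 : ℝ) ^ (d ^ n))⁻¹) →
      ((d ^ n : ℕ) : ℝ) / ((n * d * δ : ℕ) : ℝ) ^ C - ((h : ℝ) + (η : ℝ)) ≤
        Real.logb 2 (q : ℝ) := by
  refine ⟨4, by norm_num, ?_⟩
  intro n d h η δ hn hd hh hη hδ f hdeg hht hreg hrad hfin hcard hirr
    lam ρ qu v hρ hqud hvd hlam hρb hqub hvb hIdeal q hq p hp happ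
  obtain ⟨α, hαV, hclose⟩ := happ
  set V : Set (Fin n → ℂ) := {x : Fin n → ℂ | ∀ i, MvPolynomial.aeval x (f i) = 0} with hV
  set L : (Fin n → ℂ) → ℂ := fun x => ∑ i, (lam i : ℂ) * x i with hL
  -- Step A: evaluation of the geometric solution at points of V
  have key : ∀ x ∈ V, Polynomial.aeval (L x) qu = 0 ∧
      ∀ i, (ρ i : ℂ) * x i = Polynomial.aeval (L x) (v i) := by
    intro x hx
    set φ : MvPolynomial (Fin n) ℚ →ₐ[ℚ] ℂ := MvPolynomial.aeval x with hφ
    have hker : ∀ g ∈ Ideal.span (Set.range fun i =>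
        MvPolynomial.map (Int.castRingHom ℚ) (f i)), φ g = 0 := by
      intro g hg
      have hle : Ideal.span (Set.range fun i =>
          MvPolynomial.map (Int.castRingHom ℚ) (f i)) ≤ RingHom.ker φ.toRingHom := by
        rw [Ideal.span_le]
        rintro _ ⟨i, rfl⟩
        rw [SetLike.mem_coe, RingHom.mem_ker]
        show φ (MvPolynomial.map (Int.castRingHom ℚ) (f i)) = 0
        rw [hφ, ← algebraMap_int_eq, MvPolynomial.aeval_map_algebraMap]
        exact hx i
      exact hle hg
    have hU : φ (∑ i, MvPolynomial.C ((lam i : ℚ)) * MvPolynomial.X i) = L x := by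
      rw [map_sum, hL]
      congr 1
      ext i
      rw [map_mul, MvPolynomial.aeval_C, MvPolynomial.aeval_X, map_intCast]
    constructor
    · have hmem : (Polynomial.aeval
          (∑ i, MvPolynomial.C ((lam i : ℚ)) * MvPolynomial.X i)
          (Polynomial.map (Int.castRingHom ℚ) qu)) ∈
          Ideal.span (Set.range fun i =>
            MvPolynomial.map (Int.castRingHom ℚ) (f i)) := by
        rw [hIdeal]
        exact Ideal.subset_span (Set.mem_union_left _ rfl)
      have h0 := hker _ hmem
      rw [← Polynomial.aeval_algHom_apply, hU, ← algebraMap_int_eq,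
        Polynomial.aeval_map_algebraMap] at h0
      exact h0
    · intro i
      have hmem : (MvPolynomial.C ((ρ i : ℚ)) * MvPolynomial.X i -
          Polynomial.aeval
            (∑ j, MvPolynomial.C ((lam j : ℚ)) * MvPolynomial.X j)
            (Polynomial.map (Int.castRingHom ℚ) (v i))) ∈
          Ideal.span (Set.range fun i =>
            MvPolynomial.map (Int.castRingHom ℚ) (f i)) := by
        rw [hIdeal]
        exact Ideal.subset_span (Set.mem_union_right _ ⟨i, rfl⟩)
      have h0 := hker _ hmem
      rw [map_sub, ← Polynomial.aeval_algHom_apply, hU, ← algebraMap_int_eq,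
        Polynomial.aeval_map_algebraMap, map_mul, MvPolynomial.aeval_C,
        MvPolynomial.aeval_X, map_intCast, sub_eq_zero] at h0
      exact h0
  -- continuation
  -- setup
  have hq0 : (q : ℂ) ≠ 0 := Nat.cast_ne_zero.mpr (by omega)
  have hqR1 : (1 : ℝ) ≤ (q : ℝ) := by exact_mod_cast hq
  set a : Fin n → ℂ := fun k => p k / (q : ℂ) with ha
  set u : ℂ := L α with hudef
  set b : ℂ := L a with hbdef
  set z : ℂ := ∑ i, (lam i : ℂ) * p i with hz
  have hbz : b = z / (q : ℂ) := by
    rw [hbdef, hL, hz, Finset.sum_div]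
    exact Finset.sum_congr rfl fun i _ => by rw [ha]; ring
  -- distance bound on b - u
  have hcl0 : 0 ≤ cnorm (a - α) := cnorm_nonneg _
  have hcl1 : cnorm (a - α) ≤ ((2:ℝ) ^ (d ^ n))⁻¹ := le_of_lt hclose
  have hinv1 : ((2:ℝ) ^ (d ^ n))⁻¹ ≤ 1 := by
    rw [inv_le_one_iff₀]
    right
    exact one_le_pow₀ (by norm_num)
  have hbu : ‖b - u‖ ≤ (n : ℝ) * 2 ^ η * cnorm (a - α) := by
    have hsub : b - u = ∑ i, (lam i : ℂ) * ((a - α) i) := by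
      rw [hbdef, hudef, hL, ← Finset.sum_sub_distrib]
      exact Finset.sum_congr rfl fun i _ => by simp [Pi.sub_apply]; ring
    rw [hsub]
    calc ‖∑ i, (lam i : ℂ) * ((a - α) i)‖
        ≤ ∑ i, ‖(lam i : ℂ) * ((a - α) i)‖ := norm_sum_le _ _
      _ ≤ ∑ _i : Fin n, (2:ℝ) ^ η * cnorm (a - α) := by
          apply Finset.sum_le_sum
          intro i _
          rw [norm_mul]
          exact mul_le_mul (abs_intCast_le _ _ (hlam i)) (abs_le_cnorm _ i)
            (norm_nonneg _) (by positivity)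
      _ = (n : ℝ) * 2 ^ η * cnorm (a - α) := by
          rw [Finset.sum_const, Finset.card_univ, Fintype.card_fin, nsmul_eq_mul]; ring
  -- roots of qu over ℂ are exactly the L x for x ∈ V
  have hqu0 : qu ≠ 0 := fun h0 => by simp [h0] at hqud; omega
  set quC : Polynomial ℂ := qu.map (Int.castRingHom ℂ) with hquC
  have hintinj : Function.Injective (Int.castRingHom ℂ) := fun x y hxy => by
    have : ((x:ℤ):ℂ) = ((y:ℤ):ℂ) := hxy
    exact_mod_cast this
  have hquC0 : quC ≠ 0 := (Polynomial.map_ne_zero_iff hintinj).mpr hqu0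
  have haeval_eval : ∀ y : ℂ, Polynomial.aeval y qu = quC.eval y := by
    intro y
    rw [hquC, Polynomial.eval_map, Polynomial.aeval_def]
    rfl
  have hquCdeg : quC.natDegree = δ := by
    rw [hquC, Polynomial.natDegree_map_eq_of_injective hintinj, hqud]
  have hroots_card : quC.roots.card = δ := by
    rw [← hquCdeg]
    exact (Polynomial.splits_iff_card_roots.mp (IsAlgClosed.splits quC))
  have hLinj : Set.InjOn L V := by
    intro x hx y hy hxy
    funext i
    have h1 := (key x hx).2 i
    have h2 := (key y hy).2 i
    rw [hxy, ← h2] at h1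
    have hρC : (ρ i : ℂ) ≠ 0 := Int.cast_ne_zero.mpr (hρ i)
    exact mul_left_cancel₀ hρC h1
  set Vfin : Finset (Fin n → ℂ) := hfin.toFinset with hVfin
  have hVcard : Vfin.card = δ := by
    rw [hVfin, ← Set.ncard_eq_toFinset_card _ hfin, hcard]
  set S : Finset ℂ := Vfin.image L with hS
  have hScard : S.card = δ := by
    rw [hS, Finset.card_image_of_injOn (fun x hx y hy => hLinj
      ((Set.Finite.mem_toFinset hfin).mp hx) ((Set.Finite.mem_toFinset hfin).mp hy)), hVcard]
  have hSsub : S ⊆ quC.roots.toFinset := by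
    intro y hy
    obtain ⟨x, hx, rfl⟩ := Finset.mem_image.mp hy
    rw [Multiset.mem_toFinset, Polynomial.mem_roots hquC0]
    show quC.eval (L x) = 0
    rw [← haeval_eval]
    exact (key x ((Set.Finite.mem_toFinset hfin).mp hx)).1
  have hSeq : quC.roots.toFinset = S := by
    refine (Finset.eq_of_subset_of_card_le hSsub ?_).symm
    rw [hScard]
    exact le_trans (Multiset.toFinset_card_le _) (le_of_eq hroots_card)
  -- b is not a root of qu
  have hbne : Polynomial.aeval b qu ≠ 0 := by
    intro h0
    have hbroot : b ∈ quC.roots.toFinset := by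
      rw [Multiset.mem_toFinset, Polynomial.mem_roots hquC0]
      show quC.eval b = 0
      rw [← haeval_eval]; exact h0
    rw [hSeq, hS] at hbroot
    obtain ⟨x, hxV, hLx⟩ := Finset.mem_image.mp hbroot
    have hxV' : x ∈ V := (Set.Finite.mem_toFinset hfin).mp hxV
    apply hirr x hxV'
    -- b is a Gaussian rational
    have hbQ : b ∈ gaussianRat := by
      rw [hbz]
      have hzQ : z ∈ gaussianRat := by
        rw [hz]
        apply Subring.sum_mem
        intro i _
        apply Subring.mul_mem
        · exact ⟨(lam i : ℚ), 0, by push_cast; ring⟩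
        · obtain ⟨uu, ww, hw⟩ := hp i
          exact ⟨(uu : ℚ), (ww : ℚ), by rw [hw]; push_cast; ring⟩
      have hqQ : ((q : ℂ))⁻¹ ∈ gaussianRat := by
        refine ⟨((q : ℚ))⁻¹, 0, ?_⟩
        push_cast
        ring
      rw [div_eq_mul_inv]
      exact Subring.mul_mem _ hzQ hqQ
    intro k
    have h1 := (key x hxV').2 k
    rw [hLx] at h1
    have hρC : (ρ k : ℂ) ≠ 0 := Int.cast_ne_zero.mpr (hρ k)
    have hxk : x k = ((ρ k : ℂ))⁻¹ * Polynomial.aeval b (v k) := by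
      field_simp
      linear_combination h1
    have hmem : x k ∈ gaussianRat := by
      rw [hxk]
      refine Subring.mul_mem _ ⟨((ρ k : ℚ))⁻¹, 0, ?_⟩ (aeval_mem_subring _ _ hbQ)
      push_cast
      ring
    exact hmem
  -- Gaussian-integer lower bound
  have hzZ : z ∈ gaussianInt := by
    rw [hz]
    apply Subring.sum_mem
    intro i _
    apply Subring.mul_mem
    · exact ⟨lam i, 0, by push_cast; ring⟩
    · obtain ⟨uu, ww, hw⟩ := hp i
      exact ⟨uu, ww, hw⟩
  have hqZ : ((q : ℂ)) ∈ gaussianInt := ⟨(q : ℤ), 0, by push_cast; ring⟩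
  set W : ℂ := (q : ℂ) ^ δ * Polynomial.aeval b qu with hW
  have hWmem : W ∈ gaussianInt := by
    rw [hW, Polynomial.aeval_eq_sum_range' (n := δ + 1) (by omega : qu.natDegree < δ + 1),
      Finset.mul_sum]
    apply Subring.sum_mem
    intro j hj
    have hjδ : j ≤ δ := by have := Finset.mem_range.mp hj; omega
    have hterm : (q : ℂ) ^ δ * (qu.coeff j • b ^ j)
        = (qu.coeff j : ℂ) * z ^ j * (q : ℂ) ^ (δ - j) := by
      rw [zsmul_eq_mul, hbz, div_pow]
      have hqd : (q : ℂ) ^ δ = (q : ℂ) ^ (δ - j) * (q : ℂ) ^ j := by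
        rw [← pow_add]
        congr 1
        omega
      rw [hqd]
      field_simp
    rw [hterm]
    exact Subring.mul_mem _ (Subring.mul_mem _ ⟨qu.coeff j, 0, by push_cast; ring⟩
      (Subring.pow_mem _ hzZ j)) (Subring.pow_mem _ hqZ _)
  have hWne : W ≠ 0 := mul_ne_zero (pow_ne_zero _ hq0) hbne
  have hWabs : (1 : ℝ) ≤ (q : ℝ) ^ δ * ‖Polynomial.aeval b qu‖ := by
    have := gaussianInt_one_le_abs hWmem hWne
    rw [hW, norm_mul, norm_pow, Complex.norm_natCast] at this
    exact this
  -- upper bound on |qu(b)|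
  have hαroot := (key α hαV).1
  have huabs : ‖u‖ ≤ 2 ^ (η + 1) := aux_root_bound hδ hqud hqub hαroot
  set M : ℝ := (2 : ℝ) ^ (n + η + 1) with hM
  have hM1 : (1 : ℝ) ≤ M := one_le_pow₀ (by norm_num)
  have hn2 : (n : ℝ) + 2 ≤ 2 ^ (n + 1) := by
    have h1 : n + 2 ≤ 2 ^ (n + 1) := by
      have h2 : n < 2 ^ n := (Nat.lt_two_pow_self (n := n))
      have h3 : 2 ^ (n + 1) = 2 ^ n + 2 ^ n := by ring
      have h4 : 2 ≤ 2 ^ n := by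
        calc 2 = 2 ^ 1 := rfl
        _ ≤ 2 ^ n := Nat.pow_le_pow_right (by norm_num) hn
      omega
    exact_mod_cast h1
  have hbuM : ‖b - u‖ ≤ (n : ℝ) * 2 ^ η := by
    calc ‖b - u‖ ≤ (n : ℝ) * 2 ^ η * cnorm (a - α) := hbu
    _ ≤ (n : ℝ) * 2 ^ η * 1 := by
        apply mul_le_mul_of_nonneg_left (le_trans hcl1 hinv1) (by positivity)
    _ = (n : ℝ) * 2 ^ η := by ring
  have huM : ‖u‖ ≤ M := by
    calc ‖u‖ ≤ 2 ^ (η + 1) := huabs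
    _ ≤ M := by
        rw [hM]
        apply pow_le_pow_right₀ (by norm_num)
        omega
  have hbM : ‖b‖ ≤ M := by
    have h1 : ‖b‖ ≤ ‖u‖ + ‖b - u‖ := by
      calc ‖b‖ = ‖u + (b - u)‖ := by ring_nf
      _ ≤ ‖u‖ + ‖b - u‖ := norm_add_le _ _
    have h2 : (2:ℝ) ^ (η + 1) + (n : ℝ) * 2 ^ η ≤ M := by
      rw [hM]
      have : (2:ℝ) ^ (n + η + 1) = 2 ^ (n+1) * 2 ^ η := by rw [← pow_add]; congr 1; omega
      rw [this, pow_succ]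
      nlinarith [pow_pos (by norm_num : (0:ℝ) < 2) η, pow_pos (by norm_num : (0:ℝ) < 2) n]
    linarith
  have hupper : ‖Polynomial.aeval b qu‖ ≤
      ((δ:ℝ) + 1) * ((δ:ℝ) * (2 ^ η * M ^ δ)) * ‖b - u‖ := by
    have h1 := aux_eval_diff (P := qu) (δ := δ) (η := η) (by omega) hqub hM1 hbM huM
    rw [hαroot, sub_zero] at h1
    exact_mod_cast h1
  -- combine
  set K : ℕ := n + 2 * η + (n + η + 3) * δ with hK
  have hcomb : (2 : ℝ) ^ (d ^ n) ≤ (q : ℝ) ^ δ * 2 ^ K := by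
    have hchain : (1:ℝ) ≤ (q : ℝ) ^ δ * (((δ:ℝ) + 1) * ((δ:ℝ) * (2 ^ η * M ^ δ)) *
        ((n : ℝ) * 2 ^ η * cnorm (a - α))) := by
      calc (1:ℝ) ≤ (q : ℝ) ^ δ * ‖Polynomial.aeval b qu‖ := hWabs
      _ ≤ (q : ℝ) ^ δ * (((δ:ℝ) + 1) * ((δ:ℝ) * (2 ^ η * M ^ δ)) * ‖b - u‖) := by
          apply mul_le_mul_of_nonneg_left hupper (by positivity)
      _ ≤ _ := by
          apply mul_le_mul_of_nonneg_left
            (mul_le_mul_of_nonneg_left hbu (by positivity)) (by positivity)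
    have hchain2 : (1:ℝ) ≤ (q : ℝ) ^ δ * (((δ:ℝ) + 1) * ((δ:ℝ) * (2 ^ η * M ^ δ)) *
        ((n : ℝ) * 2 ^ η)) * ((2:ℝ) ^ (d ^ n))⁻¹ := by
      calc (1:ℝ) ≤ (q : ℝ) ^ δ * (((δ:ℝ) + 1) * ((δ:ℝ) * (2 ^ η * M ^ δ)) *
          ((n : ℝ) * 2 ^ η * cnorm (a - α))) := hchain
      _ ≤ _ := by
          rw [mul_assoc ((q:ℝ)^δ)]
          apply mul_le_mul_of_nonneg_left _ (by positivity)
          calc ((δ:ℝ) + 1) * ((δ:ℝ) * (2 ^ η * M ^ δ)) * ((n : ℝ) * 2 ^ η * cnorm (a - α))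
              = ((δ:ℝ) + 1) * ((δ:ℝ) * (2 ^ η * M ^ δ)) * ((n : ℝ) * 2 ^ η) * cnorm (a - α) := by
                ring
            _ ≤ ((δ:ℝ) + 1) * ((δ:ℝ) * (2 ^ η * M ^ δ)) * ((n : ℝ) * 2 ^ η) *
                ((2:ℝ) ^ (d ^ n))⁻¹ := by
                apply mul_le_mul_of_nonneg_left hcl1 (by positivity)
    have hfactor : (q : ℝ) ^ δ * (((δ:ℝ) + 1) * ((δ:ℝ) * (2 ^ η * M ^ δ)) * ((n : ℝ) * 2 ^ η))
        ≤ (q : ℝ) ^ δ * 2 ^ K := by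
      apply mul_le_mul_of_nonneg_left _ (by positivity)
      have hd1 : (δ:ℝ) + 1 ≤ 2 ^ δ := by
        have h0 : δ + 1 ≤ 2 ^ δ := by
          have := (Nat.lt_two_pow_self (n := δ)); omega
        exact_mod_cast h0
      have hd2 : (δ:ℝ) ≤ 2 ^ δ := by
        have := (Nat.lt_two_pow_self (n := δ)); exact_mod_cast this.le
      have hd3 : (n:ℝ) ≤ 2 ^ n := by
        have := (Nat.lt_two_pow_self (n := n)); exact_mod_cast this.le
      have hMδ : M ^ δ = (2:ℝ) ^ ((n + η + 1) * δ) := by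
        rw [hM, ← pow_mul]
      rw [hMδ, hK]
      have hsplit : (2:ℝ) ^ (n + 2 * η + (n + η + 3) * δ)
          = 2 ^ δ * (2 ^ δ * (2 ^ η * 2 ^ ((n + η + 1) * δ))) * (2 ^ n * 2 ^ η) := by
        rw [← pow_add, ← pow_add, ← pow_add, ← pow_add, ← pow_add]
        congr 1
        ring
      rw [hsplit]
      gcongr <;> first | exact hd1 | exact hd2 | exact hd3 | positivity
    have h2dn : (0:ℝ) < (2:ℝ) ^ (d ^ n) := by positivity
    calc (2:ℝ) ^ (d ^ n)
        = 1 * ((2:ℝ) ^ (d ^ n)) := by ring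
      _ ≤ ((q : ℝ) ^ δ * (((δ:ℝ) + 1) * ((δ:ℝ) * (2 ^ η * M ^ δ)) *
          ((n : ℝ) * 2 ^ η)) * ((2:ℝ) ^ (d ^ n))⁻¹) * ((2:ℝ) ^ (d ^ n)) :=
          mul_le_mul_of_nonneg_right hchain2 h2dn.le
      _ = (q : ℝ) ^ δ * (((δ:ℝ) + 1) * ((δ:ℝ) * (2 ^ η * M ^ δ)) * ((n : ℝ) * 2 ^ η)) := by
          field_simp
      _ ≤ (q : ℝ) ^ δ * 2 ^ K := hfactor
  -- take logarithms
  have hlog : (d ^ n : ℝ) ≤ (δ : ℝ) * Real.logb 2 q + K := by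
    have h2 : (1:ℝ) < 2 := one_lt_two
    have hmono := Real.logb_le_logb_of_le h2 (by positivity : (0:ℝ) < (2:ℝ) ^ (d ^ n)) hcomb
    rw [Real.logb_pow] at hmono
    rw [Real.logb_mul (by positivity) (by positivity), Real.logb_pow, Real.logb_pow] at hmono
    have hb2 : Real.logb 2 2 = 1 := Real.logb_self_eq_one_iff.mpr (by norm_num)
    rw [hb2, mul_one, mul_one] at hmono
    exact_mod_cast hmono
  have hR0 : 0 ≤ Real.logb 2 q := Real.logb_nonneg one_lt_two hqR1
  -- final arithmetic
  by_cases hcase : n * d * δ = 1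
  · have hδ1 : δ = 1 := Nat.eq_one_of_mul_eq_one_left hcase
    have h12 : n * d = 1 := Nat.eq_one_of_mul_eq_one_right hcase
    have hn1 : n = 1 := Nat.eq_one_of_mul_eq_one_right h12
    have hd1 : d = 1 := Nat.eq_one_of_mul_eq_one_left h12
    subst hn1; subst hd1; subst hδ1
    have hh1 : (1:ℝ) ≤ h := by exact_mod_cast hh
    have hη1 : (1:ℝ) ≤ η := by exact_mod_cast hη
    norm_num
    linarith
  · have hnd2 : 2 ≤ n * d * δ := by
      have h0 : 0 < n * d * δ := by
        apply Nat.mul_pos (Nat.mul_pos (by omega) (by omega)) (by omega)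
      omega
    set P : ℝ := ((n * d * δ : ℕ) : ℝ) ^ 4 with hP
    have hP0 : (0:ℝ) < P := by
      rw [hP]; positivity
    have hδP : (δ : ℝ) ≤ P := by
      rw [hP]
      have h1 : δ ≤ (n * d * δ) ^ 4 := by
        calc δ ≤ n * d * δ := Nat.le_mul_of_pos_left δ (Nat.mul_pos (by omega) (by omega))
        _ ≤ (n * d * δ) ^ 4 := Nat.le_self_pow (by norm_num) _
      exact_mod_cast h1
    have h8P : (8 : ℝ) * n * δ ≤ P := by
      rw [hP]
      have h2 : 8 ≤ (n * d * δ) ^ 3 := by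
        calc 8 = 2 ^ 3 := by norm_num
        _ ≤ (n * d * δ) ^ 3 := Nat.pow_le_pow_left hnd2 3
      have h3 : n * δ ≤ n * d * δ :=
        Nat.mul_le_mul (Nat.le_mul_of_pos_right n (by omega)) (le_refl δ)
      have h1 : 8 * (n * δ) ≤ (n * d * δ) ^ 4 := by
        calc 8 * (n * δ) ≤ (n * d * δ) ^ 3 * (n * d * δ) := Nat.mul_le_mul h2 h3
        _ = (n * d * δ) ^ 4 := by ring
      have h4 : ((8 * (n * δ) : ℕ) : ℝ) ≤ (((n * d * δ) ^ 4 : ℕ) : ℝ) := by exact_mod_cast h1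
      push_cast at h4 ⊢
      linarith
    have hKb : (K : ℝ) ≤ 8 * n * η * δ := by
      rw [hK]
      exact aux_K_bound hn hη hδ
    have hηhη : (η : ℝ) ≤ (h : ℝ) + (η : ℝ) := by
      have : (0:ℝ) ≤ h := Nat.cast_nonneg h
      linarith
    have hhη0 : (0:ℝ) ≤ (h : ℝ) + (η : ℝ) := by positivity
    rw [sub_le_iff_le_add, div_le_iff₀ hP0]
    have hgoal : (d ^ n : ℝ) ≤ (Real.logb 2 q + ((h:ℝ) + η)) * P := by
      calc (d ^ n : ℝ) ≤ (δ : ℝ) * Real.logb 2 q + K := hlog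
      _ ≤ (δ : ℝ) * Real.logb 2 q + 8 * n * η * δ := by linarith
      _ ≤ P * Real.logb 2 q + 8 * n * δ * ((h:ℝ) + η) := by
          have e1 : (δ:ℝ) * Real.logb 2 q ≤ P * Real.logb 2 q :=
            mul_le_mul_of_nonneg_right hδP hR0
          have e2 : (8:ℝ) * n * η * δ ≤ 8 * n * δ * ((h:ℝ) + η) := by
            have hnn : (0:ℝ) ≤ 8 * (n:ℝ) * δ := by positivity
            have e2a : (8 * (n:ℝ) * δ) * η ≤ (8 * (n:ℝ) * δ) * ((h:ℝ) + η) :=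
              mul_le_mul_of_nonneg_left hηhη hnn
            have e2b : (8:ℝ) * n * η * δ = (8 * (n:ℝ) * δ) * η := by ring
            linarith
          linarith
      _ ≤ P * Real.logb 2 q + P * ((h:ℝ) + η) := by
          have e3 : (8:ℝ) * n * δ * ((h:ℝ) + η) ≤ P * ((h:ℝ) + η) :=
            mul_le_mul_of_nonneg_right h8P hhη0
          linarith
      _ = (Real.logb 2 q + ((h:ℝ) + η)) * P := by ring
    calc ((d ^ n : ℕ) : ℝ) = (d ^ n : ℝ) := by push_cast; ring
    _ ≤ (Real.logb 2 q + ((h:ℝ) + η)) * P := hgoal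
end

section
/- Let I be a radical ideal of ℚ[X₁,…,Xₙ] such that B := ℚ[X₁,…,Xₙ]/I is a finite-dimensional ℚ-vector space of dimension D ≥ 1. Let λ₁,…,λₙ be integers, set U := λ₁X₁ + ⋯ + λₙXₙ, let u be the image of U in B, and suppose the minimal polynomial m_u ∈ ℚ[T] of u over ℚ has degree D (i.e., u is a primitive element). Then for each 1 ≤ i ≤ n there exists a polynomial v_i ∈ ℚ[T] of degree strictly less than D such that X_i − v_i(U) ∈ I, and moreover I = (m_u(U), X₁ − v₁(U), …, Xₙ − vₙ(U)) as ideals of ℚ[X₁,…,Xₙ]. -/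
set_option synthInstance.maxHeartbeats 1000000
set_option maxHeartbeats 1000000

open MvPolynomial Polynomial

/-- Auxiliary: `f - aeval σ f` lies in the ideal generated by the `X i - σ i`. -/
lemma aux_sub_aeval_mem {n : ℕ} (σ : Fin n → MvPolynomial (Fin n) ℚ)
    (f : MvPolynomial (Fin n) ℚ) :
    f - MvPolynomial.aeval σ f ∈
      Ideal.span (Set.range fun i => MvPolynomial.X i - σ i) := by
  induction f using MvPolynomial.induction_on with
  | C a => simp
  | add f g hf hg =>
      have := Ideal.add_mem _ hf hg
      convert this using 1
      simp only [map_add]; ring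
  | mul_X f i hf =>
      have h1 : f * MvPolynomial.X i - MvPolynomial.aeval σ (f * MvPolynomial.X i)
          = (f - MvPolynomial.aeval σ f) * σ i + f * (MvPolynomial.X i - σ i) := by
        simp only [map_mul, MvPolynomial.aeval_X]; ring
      rw [h1]
      exact Ideal.add_mem _ (Ideal.mul_mem_right _ _ hf)
        (Ideal.mul_mem_left _ _ (Ideal.subset_span ⟨i, rfl⟩))

/-- Shape of a geometric solution.
Let `I` be a radical ideal of `ℚ[X₁,…,Xₙ]` with `B := ℚ[X₁,…,Xₙ]/I` of finite
ℚ-dimension `D ≥ 1`.  If the image `u` of an integral linear form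
`U = λ₁X₁ + ⋯ + λₙXₙ` in `B` has minimal polynomial `m_u` of degree `D`
(i.e. `u` is a primitive element), then there are `v₁, …, vₙ ∈ ℚ[T]` of
degree `< D` with `X_i − v_i(U) ∈ I` for all `i` and
`I = (m_u(U), X₁ − v₁(U), …, Xₙ − vₙ(U))`. -/
theorem statement_10 (n D : ℕ) (hD : 1 ≤ D)
    (I : Ideal (MvPolynomial (Fin n) ℚ)) (hrad : I.IsRadical)
    (hdim : Module.finrank ℚ (MvPolynomial (Fin n) ℚ ⧸ I) = D)
    (lam : Fin n → ℤ)
    (hmin : (minpoly ℚ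
        (Ideal.Quotient.mk I
          (∑ i, MvPolynomial.C ((lam i : ℚ)) * MvPolynomial.X i))).natDegree = D) :
    ∃ v : Fin n → Polynomial ℚ,
      (∀ i, (v i).natDegree < D) ∧
      (∀ i, MvPolynomial.X i -
          Polynomial.aeval (∑ j, MvPolynomial.C ((lam j : ℚ)) * MvPolynomial.X j) (v i)
        ∈ I) ∧
      I = Ideal.span
        ({Polynomial.aeval (∑ j, MvPolynomial.C ((lam j : ℚ)) * MvPolynomial.X j)
            (minpoly ℚ
              (Ideal.Quotient.mk I
                (∑ i, MvPolynomial.C ((lam i : ℚ)) * MvPolynomial.X i)))} ∪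
          Set.range fun i =>
            MvPolynomial.X i -
              Polynomial.aeval (∑ j, MvPolynomial.C ((lam j : ℚ)) * MvPolynomial.X j)
                (v i)) := by
  set U : MvPolynomial (Fin n) ℚ := ∑ j, MvPolynomial.C ((lam j : ℚ)) * MvPolynomial.X j with hU
  set u := Ideal.Quotient.mk I U with hu
  set m := minpoly ℚ u with hm
  -- finite dimensionality
  haveI hnt : Nontrivial (MvPolynomial (Fin n) ℚ ⧸ I) :=
    Module.nontrivial_of_finrank_pos (R := ℚ) (by omega)
  haveI hfin : Module.Finite ℚ (MvPolynomial (Fin n) ℚ ⧸ I) :=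
    Module.finite_of_finrank_pos (by omega)
  -- the powers of u form a basis
  have hli : LinearIndependent ℚ fun i : Fin D => u ^ (i : ℕ) := by
    have := linearIndependent_pow (K := ℚ) u
    rwa [hmin] at this
  have hcard : Fintype.card (Fin D) = Module.finrank ℚ (MvPolynomial (Fin n) ℚ ⧸ I) := by
    simp [hdim]
  have hne : Nonempty (Fin D) := ⟨⟨0, by omega⟩⟩
  have hspan : Submodule.span ℚ (Set.range fun i : Fin D => u ^ (i : ℕ)) = ⊤ :=
    hli.span_eq_top_of_card_eq_finrank hcard
  -- every element of the quotient is a polynomial in u of degree < D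
  have key : ∀ b : MvPolynomial (Fin n) ℚ ⧸ I, ∃ p : Polynomial ℚ,
      p.natDegree < D ∧ Polynomial.aeval u p = b := by
    intro b
    have hb : b ∈ Submodule.span ℚ (Set.range fun i : Fin D => u ^ (i : ℕ)) := by
      rw [hspan]; trivial
    rw [Finsupp.mem_span_range_iff_exists_finsupp] at hb
    obtain ⟨c, hc⟩ := hb
    refine ⟨∑ k : Fin D, Polynomial.C (c k) * Polynomial.X ^ (k : ℕ), ?_, ?_⟩
    · by_cases h0 : (∑ k : Fin D, Polynomial.C (c k) * Polynomial.X ^ (k : ℕ)) = 0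
      · rw [h0]; simpa using (by omega : 0 < D)
      · exact (Polynomial.natDegree_lt_iff_degree_lt h0).2 (Polynomial.degree_sum_fin_lt c)
    · rw [← hc, Finsupp.sum_fintype]
      · simp only [map_sum, map_mul, Polynomial.aeval_C, Polynomial.aeval_X_pow]
        exact Finset.sum_congr rfl fun k _ => (Algebra.smul_def _ _).symm
      · intro i; simp
  -- choose the v i
  choose v hvdeg hveval using fun i => key (Ideal.Quotient.mk I (MvPolynomial.X i))
  have hmk : ∀ p : Polynomial ℚ,
      Ideal.Quotient.mk I (Polynomial.aeval U p) = Polynomial.aeval u p := by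
    intro p
    rw [hu, ← Ideal.Quotient.mkₐ_eq_mk ℚ I, Polynomial.aeval_algHom_apply]
  have hvmem : ∀ i, MvPolynomial.X i - Polynomial.aeval U (v i) ∈ I := by
    intro i
    rw [← Ideal.Quotient.eq_zero_iff_mem, map_sub, hmk, hveval i, sub_self]
  refine ⟨v, hvdeg, hvmem, ?_⟩
  -- m(U) ∈ I
  have hmU : Polynomial.aeval U m ∈ I := by
    rw [← Ideal.Quotient.eq_zero_iff_mem, hmk, hm]
    exact minpoly.aeval ℚ u
  apply le_antisymm
  · -- I ⊆ span
    intro f hf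
    set σ : Fin n → MvPolynomial (Fin n) ℚ := fun i => Polynomial.aeval U (v i) with hσ
    have hsub : f - MvPolynomial.aeval σ f ∈
        Ideal.span (Set.range fun i => MvPolynomial.X i - σ i) := aux_sub_aeval_mem σ f
    set q : Polynomial ℚ := MvPolynomial.aeval v f with hq
    have hcomp : MvPolynomial.aeval σ f = Polynomial.aeval U q := by
      rw [hq, ← MvPolynomial.comp_aeval_apply]
    -- the span of the X i - σ i is contained in I
    have hsmall : Ideal.span (Set.range fun i => MvPolynomial.X i - σ i) ≤ I := by
      rw [Ideal.span_le]; rintro _ ⟨i, rfl⟩; exact hvmem i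
    have hgI : MvPolynomial.aeval σ f ∈ I := by
      have h2 := I.sub_mem hf (hsmall hsub)
      rwa [sub_sub_cancel] at h2
    -- so aeval u q = 0, hence m ∣ q
    have hq0 : Polynomial.aeval u q = 0 := by
      rw [← hmk q, ← hcomp, Ideal.Quotient.eq_zero_iff_mem]
      exact hgI
    have hdvd : m ∣ q := minpoly.dvd ℚ u hq0
    obtain ⟨r, hr⟩ := hdvd
    have hgspan : MvPolynomial.aeval σ f ∈
        Ideal.span ({Polynomial.aeval U m} : Set (MvPolynomial (Fin n) ℚ)) := by
      rw [hcomp, hr, map_mul]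
      exact Ideal.mul_mem_right _ _ (Ideal.subset_span rfl)
    have : f = (f - MvPolynomial.aeval σ f) + MvPolynomial.aeval σ f := by ring
    rw [this]
    refine Ideal.add_mem _ ?_ ?_
    · refine Ideal.span_mono ?_ hsub
      exact Set.subset_union_right
    · refine Ideal.span_mono ?_ hgspan
      intro x hx; exact Set.mem_union_left _ hx
  · -- span ⊆ I
    rw [Ideal.span_le]
    rintro x (hx | ⟨i, rfl⟩)
    · rw [Set.mem_singleton_iff] at hx; subst hx; exact hmU
    · exact hvmem i
end

section
/- Let 1 ≤ r ≤ n and let f₁,…,f_{r−1} ∈ ℚ[Y₁,…,Yₙ]. Set R := ℚ[Y₁,…,Y_{n−r+1}], B := ℚ[Y₁,…,Yₙ]/(f₁,…,f_{r−1}), and assume the canonical ℚ-algebra homomorphism R → B is injective and makes B a free R-module of finite rank D ≥ 1. Let f_r ∈ ℚ[Y₁,…,Yₙ] and let M_{f_r} ∈ M_D(R) be the matrix, with respect to some R-module basis of B, of the R-linear map 'multiplication by the class of f_r' on B. Then the ideal (f₁,…,f_r) equals the unit ideal of ℚ[Y₁,…,Yₙ] if and only if det(M_{f_r}) is a nonzero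 constant, i.e., a nonzero element of ℚ (equivalently, a unit of R). -/
set_option synthInstance.maxHeartbeats 400000


lemma mv_isUnit_eq_C {k : ℕ} (p : MvPolynomial (Fin k) ℚ) (h : IsUnit p) :
    ∃ c : ℚ, c ≠ 0 ∧ p = MvPolynomial.C c := by
  induction k with
  | zero =>
      refine ⟨MvPolynomial.constantCoeff p, ?_, (MvPolynomial.eq_C_of_isEmpty p)⟩
      have := h.map (MvPolynomial.constantCoeff)
      exact this.ne_zero
  | succ k ih =>
      have h2 := h.map (MvPolynomial.finSuccEquiv ℚ k)
      obtain ⟨r, hr, hrp⟩ := Polynomial.isUnit_iff.mp h2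
      obtain ⟨c, hc, rfl⟩ := ih r hr
      refine ⟨c, hc, ?_⟩
      have : (MvPolynomial.finSuccEquiv ℚ k) p =
          (MvPolynomial.finSuccEquiv ℚ k) (MvPolynomial.C c) := by
        rw [← hrp]
        simp [MvPolynomial.finSuccEquiv_apply]
      exact (MvPolynomial.finSuccEquiv ℚ k).injective this

lemma span_union_singleton_eq_top_iff {A : Type*} [CommRing A] (S : Set A) (g : A) :
    Ideal.span (S ∪ {g}) = ⊤ ↔ IsUnit (Ideal.Quotient.mk (Ideal.span S) g) := by
  constructor
  · intro h
    rw [Ideal.span_union, Ideal.eq_top_iff_one] at h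
    obtain ⟨a, ha, b, hb, hab⟩ := Submodule.mem_sup.mp h
    obtain ⟨t, ht⟩ := Ideal.mem_span_singleton'.mp hb
    refine IsUnit.of_mul_eq_one (Ideal.Quotient.mk _ t) ?_
    rw [← map_mul, ← map_one (Ideal.Quotient.mk (Ideal.span S))]
    rw [Ideal.Quotient.mk_eq_mk_iff_sub_mem]
    have : g * t - 1 = -a := by rw [mul_comm g t, ht]; linear_combination hab
    rw [this]
    exact (Ideal.span S).neg_mem ha
  · intro h
    obtain ⟨b, hb⟩ := isUnit_iff_exists_inv.mp h
    obtain ⟨t, rfl⟩ := Ideal.Quotient.mk_surjective b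
    rw [← map_mul, ← map_one (Ideal.Quotient.mk (Ideal.span S)),
      Ideal.Quotient.mk_eq_mk_iff_sub_mem] at hb
    rw [Ideal.eq_top_iff_one]
    have h1 : g * t ∈ Ideal.span (S ∪ {g}) := by
      exact Ideal.mul_mem_right _ _ (Ideal.subset_span (by simp))
    have h2 : g * t - 1 ∈ Ideal.span (S ∪ {g}) :=
      Ideal.span_mono Set.subset_union_left hb
    have := Ideal.sub_mem _ h1 h2
    simpa using this

lemma isUnit_iff_det_leftMulMatrix {R B : Type*} [CommRing R] [CommRing B] [Algebra R B]
    {D : ℕ} (bas : Module.Basis (Fin D) R B) (b : B) :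
    IsUnit b ↔ IsUnit (Algebra.leftMulMatrix bas b).det := by
  constructor
  · intro h
    exact (Matrix.isUnit_iff_isUnit_det _).mp (h.map (Algebra.leftMulMatrix bas))
  · intro h
    obtain ⟨u, hu⟩ := (Matrix.isUnit_iff_isUnit_det _).mpr h
    have hmul : (Algebra.leftMulMatrix bas b) * (↑u⁻¹ : Matrix (Fin D) (Fin D) R) = 1 := by
      rw [← hu]; exact u.mul_inv
    have h2 := congrArg (Matrix.toLin bas bas) hmul
    rw [Matrix.toLin_mul bas bas bas, Matrix.toLin_one] at h2
    have h3 := LinearMap.congr_fun h2 1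
    simp only [LinearMap.comp_apply, LinearMap.id_apply] at h3
    have h4 : Matrix.toLin bas bas (Algebra.leftMulMatrix bas b) = LinearMap.mulLeft R b := by
      rw [← Algebra.toMatrix_lmul_eq, Matrix.toLin_toMatrix]
    rw [h4, LinearMap.mulLeft_apply] at h3
    exact IsUnit.of_mul_eq_one _ h3


/-- Consistency test via the homothety matrix.
Let `1 ≤ r ≤ n`, `f₁, …, f_{r−1} ∈ ℚ[Y₁,…,Yₙ]`, `R := ℚ[Y₁,…,Y_{n−r+1}]` and
`B := ℚ[Y₁,…,Yₙ]/(f₁,…,f_{r−1})`.  Assume the canonical ℚ-algebra map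
`φ : R → B` is injective and makes `B` a free `R`-module of finite rank
`D ≥ 1`.  For `f_r ∈ ℚ[Y₁,…,Yₙ]`, let `M_{f_r}` be the matrix (with respect
to an `R`-basis of `B`) of multiplication by the class of `f_r`.  Then
`(f₁,…,f_r) = (1)` if and only if `det M_{f_r}` is a nonzero constant of `ℚ`
(equivalently, a unit of `R`). -/
theorem statement_11 (n r D : ℕ) (hr : 1 ≤ r) (hrn : r ≤ n) (hD : 1 ≤ D)
    (f : Fin (r - 1) → MvPolynomial (Fin n) ℚ) (fr : MvPolynomial (Fin n) ℚ)
    (φ : MvPolynomial (Fin (n - r + 1)) ℚ →+*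
      MvPolynomial (Fin n) ℚ ⧸ Ideal.span (Set.range f))
    (hφ : φ = (Ideal.Quotient.mk (Ideal.span (Set.range f))).comp
      (MvPolynomial.rename (Fin.castLE (by omega : n - r + 1 ≤ n))).toRingHom)
    (hinj : Function.Injective φ) :
    letI : Algebra (MvPolynomial (Fin (n - r + 1)) ℚ)
        (MvPolynomial (Fin n) ℚ ⧸ Ideal.span (Set.range f)) := φ.toAlgebra
    ∀ _bas : Module.Basis (Fin D) (MvPolynomial (Fin (n - r + 1)) ℚ)
        (MvPolynomial (Fin n) ℚ ⧸ Ideal.span (Set.range f)),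
      (Ideal.span (Set.range f ∪ {fr}) = ⊤ ↔
        ∃ c : ℚ, c ≠ 0 ∧
          (Algebra.leftMulMatrix _bas
            (Ideal.Quotient.mk (Ideal.span (Set.range f)) fr)).det =
            MvPolynomial.C c) := by
  letI : Algebra (MvPolynomial (Fin (n - r + 1)) ℚ)
      (MvPolynomial (Fin n) ℚ ⧸ Ideal.span (Set.range f)) := φ.toAlgebra
  intro _bas
  rw [span_union_singleton_eq_top_iff,
    isUnit_iff_det_leftMulMatrix _bas (Ideal.Quotient.mk (Ideal.span (Set.range f)) fr)]
  constructor
  · intro h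
    exact mv_isUnit_eq_C _ h
  · rintro ⟨c, hc, h⟩
    rw [h]
    exact (isUnit_iff_ne_zero.mpr hc).map MvPolynomial.C
end

section
/- Let R be a commutative ring and f₁,…,fₙ ∈ R[X₁,…,Xₙ]. For 1 ≤ j ≤ n write f_j^Y := f_j(Y₁,…,Yₙ) ∈ R[X₁,…,Xₙ,Y₁,…,Yₙ]. Suppose (l_{kj}) and (l'_{kj}) are two n×n matrices with entries in R[X₁,…,Xₙ,Y₁,…,Yₙ] such that for every j, f_j^Y − f_j = Σ_{k=1}^n l_{kj}·(Y_k − X_k) = Σ_{k=1}^n l'_{kj}·(Y_k − X_k). Then det(l_{kj}) − det(l'_{kj}) belongs to the ideal of R[X₁,…,Xₙ,Y₁,…,Yₙ] generated by f₁,…,fₙ, f₁^Y,…,fₙ^Y. In other words, the pseudo-jacobian determinant Δ := det(l_{kj}) is well defined modulo (f₁,…,fₙ, f₁^Y,…,fₙ^Y). -/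
namespace Statement12Aux
open MvPolynomial Finset Matrix


lemma polyX_regular {B : Type*} [CommRing B] {p : Polynomial B} (h : Polynomial.X * p = 0) :
    p = 0 := by
  ext k
  have := congrArg (fun q => Polynomial.coeff q (k+1)) h
  simpa [Polynomial.coeff_X_mul] using this

lemma var_syzygy {B : Type*} [CommRing B] :
    ∀ (n : ℕ) (c : Fin n → MvPolynomial (Fin n) B),
    (∑ m, c m * X m) = 0 →
    ∃ a : Fin n → Fin n → MvPolynomial (Fin n) B,
      ∀ m, c m = (∑ q, a m q * X q) - (∑ q, a q m * X q)
  | 0, c, _ => ⟨0, fun m => m.elim0⟩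
  | (n+1), c, h => by
    classical
    set F := MvPolynomial.finSuccEquiv B n with hF
    have hrel : (F (c 0)) * Polynomial.X
        + ∑ m : Fin n, F (c m.succ) * Polynomial.C (X m) = 0 := by
      have h2 := congrArg F h
      rw [map_sum, map_zero] at h2
      rw [Fin.sum_univ_succ] at h2
      simpa [hF, finSuccEquiv_X_zero, finSuccEquiv_X_succ] using h2
    set ee : Fin n → MvPolynomial (Fin n) B := fun m => (F (c m.succ)).eval 0 with hee
    have hc' : (∑ m, ee m * X m) = 0 := by
      have h3 := congrArg (Polynomial.eval 0) hrel
      simpa [Polynomial.eval_finset_sum] using h3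
    obtain ⟨aa, haa⟩ := var_syzygy n ee hc'
    have hdiv : ∀ m : Fin n, ∃ r, F (c m.succ) = Polynomial.C (ee m) + Polynomial.X * r := by
      intro m
      have hd : Polynomial.X ∣ (F (c m.succ) - Polynomial.C (ee m)) := by
        rw [Polynomial.X_dvd_iff]
        simp [hee, Polynomial.coeff_zero_eq_eval_zero]
      obtain ⟨r, hr⟩ := hd
      exact ⟨r, by linear_combination hr⟩
    choose r hr using hdiv
    have hsum : ∑ m : Fin n, F (c m.succ) * Polynomial.C (X m)
        = Polynomial.X * ∑ m, r m * Polynomial.C (X m) := by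
      calc ∑ m : Fin n, F (c m.succ) * Polynomial.C (X m)
          = ∑ m : Fin n, (Polynomial.C (ee m * X m)
              + Polynomial.X * (r m * Polynomial.C (X m))) := by
            apply Finset.sum_congr rfl; intro m _; rw [hr m, _root_.map_mul]; ring
        _ = Polynomial.C (∑ m, ee m * X m) + Polynomial.X * ∑ m, r m * Polynomial.C (X m) := by
            rw [Finset.sum_add_distrib, ← Finset.mul_sum, map_sum]
        _ = _ := by rw [hc', map_zero, zero_add]
    have h4 : Polynomial.X * (F (c 0) + ∑ m, r m * Polynomial.C (X m)) = 0 := by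
      rw [mul_add]; linear_combination hrel - hsum
    have hp0 : F (c 0) = -∑ m, r m * Polynomial.C (X m) :=
      eq_neg_of_add_eq_zero_left (polyX_regular h4)
    refine ⟨fun i j => Fin.cases (0 : MvPolynomial (Fin (n+1)) B)
      (fun m => Fin.cases (F.symm (r m)) (fun q => F.symm (Polynomial.C (aa m q))) j) i, ?_⟩
    intro m
    induction m using Fin.cases with
    | zero =>
        apply F.injective
        rw [map_sub, map_sum, map_sum]
        simp only [Fin.sum_univ_succ, Fin.cases_zero, Fin.cases_succ, zero_mul, _root_.map_mul,
          map_zero, Finset.sum_const_zero, F.apply_symm_apply, hF, finSuccEquiv_X_zero,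
          finSuccEquiv_X_succ, add_zero, zero_add]
        rw [hp0]
        simp
    | succ m =>
        apply F.injective
        rw [map_sub, map_sum, map_sum]
        simp only [Fin.sum_univ_succ, Fin.cases_zero, Fin.cases_succ, zero_mul, _root_.map_mul,
          map_zero, Finset.sum_const_zero, F.apply_symm_apply, hF, finSuccEquiv_X_zero,
          finSuccEquiv_X_succ, add_zero, zero_add, AlgEquiv.apply_symm_apply]
        rw [hr m]
        have : ∑ q : Fin n, Polynomial.C (aa m q) * Polynomial.C (X q)
            - ∑ q : Fin n, Polynomial.C (aa q m) * Polynomial.C (X q)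
            = Polynomial.C (ee m) := by
          rw [haa m, map_sub, map_sum, map_sum]
          simp [_root_.map_mul]
        linear_combination -this

noncomputable section
variable (R : Type*) [CommRing R] (n : ℕ)

abbrev Bb := MvPolynomial (Fin n) R

def tau : MvPolynomial (Fin n) (Bb R n) ≃ₐ[Bb R n] MvPolynomial (Fin n) (Bb R n) :=
  AlgEquiv.ofAlgHom (aeval (fun k => X k + C (X k))) (aeval (fun k => X k - C (X k)))
    (by ext i : 1 <;> simp [algebraMap_eq])
    (by ext i : 1 <;> simp [algebraMap_eq])

def Phi : MvPolynomial (Fin n ⊕ Fin n) R ≃+* MvPolynomial (Fin n) (Bb R n) :=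
  (((renameEquiv R (Equiv.sumComm (Fin n) (Fin n))).trans
    (sumAlgEquiv R (Fin n) (Fin n))).toRingEquiv).trans (tau R n).toRingEquiv

lemma Phi_d (k : Fin n) : Phi R n (X (Sum.inr k) - X (Sum.inl k)) = X k := by
  simp [Phi, tau, sumAlgEquiv_X_inl, sumAlgEquiv_X_inr, algebraMap_eq]

lemma d_syzygy (c : Fin n → MvPolynomial (Fin n ⊕ Fin n) R)
    (h : ∑ m, c m * (X (Sum.inr m) - X (Sum.inl m)) = 0) :
    ∃ a : Fin n → Fin n → MvPolynomial (Fin n ⊕ Fin n) R,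
      ∀ m, c m = (∑ q, a m q * (X (Sum.inr q) - X (Sum.inl q)))
        - (∑ q, a q m * (X (Sum.inr q) - X (Sum.inl q))) := by
  have h2 : ∑ m, (Phi R n (c m)) * X m = 0 := by
    have := congrArg (Phi R n) h
    rw [map_sum, map_zero] at this
    simpa [_root_.map_mul, Phi_d] using this
  obtain ⟨a', ha'⟩ := var_syzygy n _ h2
  refine ⟨fun i j => (Phi R n).symm (a' i j), fun m => ?_⟩
  have := congrArg (Phi R n).symm (ha' m)
  rw [map_sub, map_sum, map_sum] at this
  simpa [_root_.map_mul, (Phi R n).symm_apply_apply,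
    show ∀ q, (Phi R n).symm (X q) = X (Sum.inr q) - X (Sum.inl q) from
      fun q => by rw [← Phi_d R n q, (Phi R n).symm_apply_apply]] using this
end


section MatrixLemmas

variable {A : Type*} [CommRing A] {n : ℕ}

lemma det_updateColumn_expand (M : Matrix (Fin n) (Fin n) A) (i : Fin n) (c : Fin n → A) :
    (M.updateCol i c).det = ∑ m, c m * (M.updateCol i (Pi.single m 1)).det := by
  have hc : c = ∑ m, c m • (Pi.single m (1 : A) : Fin n → A) := by
    ext j
    simp [Pi.single_apply, Finset.sum_apply]
  calc (M.updateCol i c).det = cramer M c i := (cramer_apply M c i).symm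
    _ = ∑ m, c m * (M.updateCol i (Pi.single m 1)).det := by
        conv_lhs => rw [hc]
        rw [map_sum]
        simp [cramer_apply]

lemma swap_mem (I : Ideal A) (d : Fin n → A) (M : Matrix (Fin n) (Fin n) A) (i : Fin n)
    (hM : ∀ j, j ≠ i → (∑ k, M k j * d k) ∈ I) (p q : Fin n) :
    d q * (M.updateCol i (Pi.single p 1)).det
      - d p * (M.updateCol i (Pi.single q 1)).det ∈ I := by
  classical
  set N := M.updateCol i (Pi.single p 1) with hN
  have key : N.det • d = (adjugate Nᵀ) *ᵥ (Nᵀ *ᵥ d) := by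
    rw [mulVec_mulVec, adjugate_mul, det_transpose, smul_mulVec, one_mulVec]
  have keyq : N.det * d q = ∑ j, adjugate Nᵀ q j * ∑ k, N k j * d k := by
    have := congrFun key q
    simp only [Pi.smul_apply, smul_eq_mul, mulVec, dotProduct, transpose_apply] at this
    exact this
  -- column i of N sums to d p
  have hcol : ∑ k, N k i * d k = d p := by
    simp [hN, updateCol_apply, Pi.single_apply]
  -- adjugate entry at (q, i)
  have hadj : adjugate Nᵀ q i = (M.updateCol i (Pi.single q 1)).det := by
    rw [adjugate_apply, updateRow_transpose, det_transpose]
    congr 1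
    ext k j
    by_cases hj : j = i <;> simp [hN, updateCol_apply, hj]
  have hsplit : N.det * d q - (M.updateCol i (Pi.single q 1)).det * d p
      = ∑ j ∈ univ.erase i, adjugate Nᵀ q j * ∑ k, N k j * d k := by
    rw [keyq, ← Finset.add_sum_erase _ _ (mem_univ i), hcol, hadj]
    ring
  have : d q * N.det - d p * (M.updateCol i (Pi.single q 1)).det
      = ∑ j ∈ univ.erase i, adjugate Nᵀ q j * ∑ k, N k j * d k := by
    rw [← hsplit]; ring
  rw [this]
  refine Ideal.sum_mem _ fun j hj => Ideal.mul_mem_left _ _ ?_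
  have hji : j ≠ i := (Finset.mem_erase.mp hj).1
  have : ∑ k, N k j * d k = ∑ k, M k j * d k := by
    apply Finset.sum_congr rfl
    intro k _
    rw [hN, updateCol_apply, if_neg hji]
  rw [this]
  exact hM j hji

end MatrixLemmas

end Statement12Aux

open Statement12Aux Matrix Finset in
/-- The pseudo-jacobian determinant is well defined.
Let `R` be a commutative ring, `f₁, …, fₙ ∈ R[X₁,…,Xₙ]`, and for each `j` let
`f_j^Y` be obtained from `f_j` by substituting `Y`'s for `X`'s in the
polynomial ring `R[X₁,…,Xₙ,Y₁,…,Yₙ]` (variables indexed by `Fin n ⊕ Fin n`,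
with `X` the left and `Y` the right copy).  If `(l_{kj})` and `(l'_{kj})`
both satisfy `f_j^Y − f_j = Σ_k l_{kj}(Y_k − X_k)`, then
`det(l_{kj}) − det(l'_{kj})` lies in the ideal generated by
`f₁, …, fₙ, f₁^Y, …, fₙ^Y`. -/
theorem statement_12 (R : Type*) [CommRing R] (n : ℕ)
    (f : Fin n → MvPolynomial (Fin n) R)
    (l l' : Fin n → Fin n → MvPolynomial (Fin n ⊕ Fin n) R)
    (hl : ∀ j, MvPolynomial.rename Sum.inr (f j) - MvPolynomial.rename Sum.inl (f j) =
      ∑ k, l k j * (MvPolynomial.X (Sum.inr k) - MvPolynomial.X (Sum.inl k)))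
    (hl' : ∀ j, MvPolynomial.rename Sum.inr (f j) - MvPolynomial.rename Sum.inl (f j) =
      ∑ k, l' k j * (MvPolynomial.X (Sum.inr k) - MvPolynomial.X (Sum.inl k))) :
    Matrix.det (Matrix.of fun k j => l k j) - Matrix.det (Matrix.of fun k j => l' k j) ∈
      Ideal.span (Set.range (fun j => MvPolynomial.rename Sum.inl (f j)) ∪
        Set.range (fun j => MvPolynomial.rename Sum.inr (f j))) := by
  classical
  set d : Fin n → MvPolynomial (Fin n ⊕ Fin n) R :=
    fun k => MvPolynomial.X (Sum.inr k) - MvPolynomial.X (Sum.inl k) with hd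
  set I := Ideal.span (Set.range (fun j => MvPolynomial.rename Sum.inl (f j)) ∪
        Set.range (fun j => MvPolynomial.rename Sum.inr (f j))) with hI
  have hgI : ∀ j, (∑ k, l k j * d k) ∈ I := fun j => by
    rw [← hl j]
    exact Ideal.sub_mem _ (Ideal.subset_span (Set.mem_union_right _ ⟨j, rfl⟩))
      (Ideal.subset_span (Set.mem_union_left _ ⟨j, rfl⟩))
  have hgI' : ∀ j, (∑ k, l' k j * d k) ∈ I := fun j => by
    rw [← hl' j]
    exact Ideal.sub_mem _ (Ideal.subset_span (Set.mem_union_right _ ⟨j, rfl⟩))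
      (Ideal.subset_span (Set.mem_union_left _ ⟨j, rfl⟩))
  set P : ℕ → Matrix (Fin n) (Fin n) (MvPolynomial (Fin n ⊕ Fin n) R) :=
    fun i => Matrix.of fun k j => if (j : ℕ) < i then l' k j else l k j with hP
  have hP0 : P 0 = Matrix.of fun k j => l k j := by
    ext k j; simp [hP]
  have hPn : P n = Matrix.of fun k j => l' k j := by
    ext k j; simp [hP, j.isLt]
  rw [← hP0, ← hPn, ← Finset.sum_range_sub' (fun i => (P i).det) n]
  apply Ideal.sum_mem
  intro i hi
  have hin : i < n := Finset.mem_range.mp hi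
  set ii : Fin n := ⟨i, hin⟩ with hii
  have e1 : P i = (P i).updateCol ii (fun k => l k ii) := by
    ext k j
    by_cases hj : j = ii
    · subst hj; simp [hP, updateCol_apply, hii]
    · simp [updateCol_apply, hj]
  have e2 : P (i + 1) = (P i).updateCol ii (fun k => l' k ii) := by
    ext k j
    by_cases hj : j = ii
    · subst hj; simp [hP, updateCol_apply, Nat.lt_succ_self, hii]
    · have hji : (j : ℕ) ≠ i := fun h => hj (Fin.ext h)
      have : ((j : ℕ) < i + 1) ↔ ((j : ℕ) < i) := by omega
      simp [hP, updateCol_apply, hj, this]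
  obtain ⟨a, ha⟩ := d_syzygy R n (fun m => l m ii - l' m ii) (by
    have h1 := hl ii
    have h2 := hl' ii
    simp only [sub_mul, Finset.sum_sub_distrib]
    rw [← h1, ← h2]
    ring)
  set D : Fin n → MvPolynomial (Fin n ⊕ Fin n) R :=
    fun m => ((P i).updateCol ii (Pi.single m 1)).det with hD
  have expand : (P i).det - (P (i + 1)).det = ∑ m, ∑ q, a m q * (d q * D m - d m * D q) := by
    calc (P i).det - (P (i + 1)).det
        = ∑ m, (l m ii - l' m ii) * D m := by
          conv_lhs => rw [e1, e2]
          rw [det_updateColumn_expand, det_updateColumn_expand, ← Finset.sum_sub_distrib]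
          exact Finset.sum_congr rfl fun m _ => by rw [hD]; ring
      _ = ∑ m, ((∑ q, a m q * d q) - (∑ q, a q m * d q)) * D m :=
          Finset.sum_congr rfl fun m _ => by rw [ha m]
      _ = (∑ m, ∑ q, a m q * (d q * D m)) - (∑ m, ∑ q, a q m * (d q * D m)) := by
          rw [← Finset.sum_sub_distrib]
          refine Finset.sum_congr rfl fun m _ => ?_
          rw [sub_mul, Finset.sum_mul, Finset.sum_mul]
          congr 1 <;> exact Finset.sum_congr rfl fun q _ => by ring
      _ = (∑ m, ∑ q, a m q * (d q * D m)) - (∑ m, ∑ q, a m q * (d m * D q)) := by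
          congr 1
          exact Finset.sum_comm
      _ = ∑ m, ∑ q, a m q * (d q * D m - d m * D q) := by
          rw [← Finset.sum_sub_distrib]
          refine Finset.sum_congr rfl fun m _ => ?_
          rw [← Finset.sum_sub_distrib]
          exact Finset.sum_congr rfl fun q _ => by ring
  rw [expand]
  refine Ideal.sum_mem _ fun m _ => Ideal.sum_mem _ fun q _ => Ideal.mul_mem_left _ _ ?_
  refine swap_mem I d (P i) ii (fun j _ => ?_) m q
  by_cases h : (j : ℕ) < i
  · have : ∑ k, (P i) k j * d k = ∑ k, l' k j * d k :=
      Finset.sum_congr rfl fun k _ => by simp [hP, h]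
    rw [this]; exact hgI' j
  · have : ∑ k, (P i) k j * d k = ∑ k, l k j * d k :=
      Finset.sum_congr rfl fun k _ => by simp [hP, h]
    rw [this]; exact hgI j
end

section
/- Let R := ℚ[Z₁,…,Z_r] be a polynomial ring with field of fractions K := ℚ(Z₁,…,Z_r), let B be a commutative R-algebra that is free of rank D ≥ 1 as an R-module, let P = (p₁,…,p_r) ∈ ℚ^r, and let m_P := (Z₁ − p₁,…,Z_r − p_r) be the corresponding maximal ideal of R. Let u ∈ B. If the images of 1, u, u², …, u^{D−1} in the ℚ-algebra B/m_P·B are linearly independent over ℚ, then the images of 1, u, u², …, u^{D−1} in K ⊗_R B form a K-vector space basis of K ⊗_R B. In particular, u is then a primitive element of the ring extension R → B, i.e., the minimal polynomial of u over K has degree D = rank_R B. -/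
open TensorProduct

/-- Every multivariate polynomial is congruent to the constant `eval P g`
modulo the ideal generated by the `X i - C (P i)`. -/
lemma sub_C_eval_mem_span {σ : Type*} {k : Type*} [CommRing k] (P : σ → k)
    (g : MvPolynomial σ k) :
    g - MvPolynomial.C (MvPolynomial.eval P g) ∈
      Ideal.span (Set.range fun i => MvPolynomial.X i - MvPolynomial.C (P i)) := by
  set I := Ideal.span (Set.range fun i : σ =>
    (MvPolynomial.X i : MvPolynomial σ k) - MvPolynomial.C (P i)) with hI
  induction g using MvPolynomial.induction_on with
  | C a => simp
  | add p q hp hq =>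
      have : p + q - MvPolynomial.C (MvPolynomial.eval P (p + q)) =
          (p - MvPolynomial.C (MvPolynomial.eval P p)) +
          (q - MvPolynomial.C (MvPolynomial.eval P q)) := by
        rw [map_add, map_add]; ring
      rw [this]; exact I.add_mem hp hq
  | mul_X p i hp =>
      have : p * MvPolynomial.X i - MvPolynomial.C (MvPolynomial.eval P (p * MvPolynomial.X i)) =
          p * (MvPolynomial.X i - MvPolynomial.C (P i)) +
          (p - MvPolynomial.C (MvPolynomial.eval P p)) * MvPolynomial.C (P i) := by
        rw [map_mul, MvPolynomial.eval_X, map_mul]; ring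
      rw [this]
      exact I.add_mem
        (Ideal.mul_mem_left _ _ (Ideal.subset_span ⟨i, rfl⟩))
        (Ideal.mul_mem_right _ _ hp)

lemma mem_span_of_eval_eq_zero {σ : Type*} {k : Type*} [CommRing k] (P : σ → k)
    {g : MvPolynomial σ k} (h : MvPolynomial.eval P g = 0) :
    g ∈ Ideal.span (Set.range fun i => MvPolynomial.X i - MvPolynomial.C (P i)) := by
  have := sub_C_eval_mem_span P g
  rwa [h, map_zero, sub_zero] at this

/-- A primitive element of a lifting fiber is a primitive
element of the extension.  Let `R := ℚ[Z₁,…,Z_r]` with fraction field `K`,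
let `B` be an `R`-algebra free of rank `D ≥ 1` as `R`-module, let
`P ∈ ℚ^r` with maximal ideal `m_P = (Z₁−p₁,…,Z_r−p_r)`, and let `u ∈ B`.
If the images of `1, u, …, u^{D−1}` in `B/m_P·B` are ℚ-linearly independent,
then `1 ⊗ u^0, …, 1 ⊗ u^{D−1}` form a `K`-basis of `K ⊗_R B`; in particular
the minimal polynomial of `u` over `K` has degree `D = rank_R B`. -/
theorem statement_14 (r D : ℕ) (hD : 1 ≤ D)
    (B : Type) [CommRing B]
    [Algebra (MvPolynomial (Fin r) ℚ) B] [Algebra ℚ B]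
    [IsScalarTower ℚ (MvPolynomial (Fin r) ℚ) B]
    (bas : Module.Basis (Fin D) (MvPolynomial (Fin r) ℚ) B)
    (P : Fin r → ℚ) (u : B)
    (hindep : LinearIndependent ℚ fun k : Fin D =>
      Ideal.Quotient.mk
        (Ideal.map (algebraMap (MvPolynomial (Fin r) ℚ) B)
          (Ideal.span (Set.range fun i => MvPolynomial.X i - MvPolynomial.C (P i))))
        (u ^ (k : ℕ))) :
    LinearIndependent (FractionRing (MvPolynomial (Fin r) ℚ))
      (fun k : Fin D =>
        ((1 : FractionRing (MvPolynomial (Fin r) ℚ))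
          ⊗ₜ[MvPolynomial (Fin r) ℚ] (u ^ (k : ℕ)) :
          FractionRing (MvPolynomial (Fin r) ℚ) ⊗[MvPolynomial (Fin r) ℚ] B)) ∧
    Submodule.span (FractionRing (MvPolynomial (Fin r) ℚ))
      (Set.range fun k : Fin D =>
        ((1 : FractionRing (MvPolynomial (Fin r) ℚ))
          ⊗ₜ[MvPolynomial (Fin r) ℚ] (u ^ (k : ℕ)) :
          FractionRing (MvPolynomial (Fin r) ℚ) ⊗[MvPolynomial (Fin r) ℚ] B)) = ⊤ ∧
    (minpoly (FractionRing (MvPolynomial (Fin r) ℚ))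
      ((1 : FractionRing (MvPolynomial (Fin r) ℚ))
        ⊗ₜ[MvPolynomial (Fin r) ℚ] u :
        FractionRing (MvPolynomial (Fin r) ℚ) ⊗[MvPolynomial (Fin r) ℚ] B)).natDegree
      = D := by
  classical
  set R := MvPolynomial (Fin r) ℚ with hR
  set K := FractionRing R with hK
  set I := Ideal.map (algebraMap R B)
    (Ideal.span (Set.range fun i => MvPolynomial.X i - MvPolynomial.C (P i))) with hIdef
  set w : Fin D → B := fun k => u ^ (k : ℕ) with hw
  set M : Matrix (Fin D) (Fin D) R := bas.toMatrix w with hM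
  -- the determinant of the coordinate matrix is nonzero
  have hdet : M.det ≠ 0 := by
    intro h0
    have hdetN : (M.map (MvPolynomial.eval P)).det = 0 := by
      rw [← RingHom.mapMatrix_apply, ← RingHom.map_det, h0, map_zero]
    obtain ⟨c, hc, hmul⟩ := (Matrix.exists_mulVec_eq_zero_iff).mpr hdetN
    -- build the relation in B
    have hz : (∑ k, c k • u ^ (k : ℕ)) ∈ I := by
      have hrepr : (∑ k, c k • u ^ (k : ℕ)) = ∑ i, (∑ k, c k • M i k) • bas i := by
        calc (∑ k, c k • u ^ (k : ℕ)) = ∑ k, c k • (∑ i, M i k • bas i) := by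
              refine Finset.sum_congr rfl fun k _ => ?_
              congr 1
              exact (bas.sum_repr (u ^ (k : ℕ))).symm
          _ = ∑ k, ∑ i, (c k • M i k) • bas i := by
              refine Finset.sum_congr rfl fun k _ => ?_
              rw [Finset.smul_sum]
              exact Finset.sum_congr rfl fun i _ => (smul_assoc (c k) (M i k) (bas i)).symm
          _ = ∑ i, (∑ k, c k • M i k) • bas i := by
              rw [Finset.sum_comm]
              exact Finset.sum_congr rfl fun i _ => (Finset.sum_smul).symm
      rw [hrepr]
      refine Ideal.sum_mem _ fun i _ => ?_
      have hgi : MvPolynomial.eval P (∑ k, c k • M i k) = 0 := by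
        have : MvPolynomial.eval P (∑ k, c k • M i k) = ∑ k, c k * (M.map (MvPolynomial.eval P)) i k := by
          rw [map_sum]
          refine Finset.sum_congr rfl fun k _ => ?_
          rw [MvPolynomial.smul_eq_C_mul, map_mul, MvPolynomial.eval_C, Matrix.map_apply]
        rw [this]
        have := congrFun hmul i
        simpa [Matrix.mulVec, dotProduct, mul_comm] using this
      have hmem : (∑ k, c k • M i k) ∈
          Ideal.span (Set.range fun i => MvPolynomial.X i - MvPolynomial.C (P i)) :=
        mem_span_of_eval_eq_zero P hgi
      rw [Algebra.smul_def]
      exact Ideal.mul_mem_right _ _ (Ideal.mem_map_of_mem _ hmem)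
    -- contradict hindep
    have hzero : ∑ k, c k • (Ideal.Quotient.mk I (u ^ (k : ℕ))) = 0 := by
      have : Ideal.Quotient.mk I (∑ k, c k • u ^ (k : ℕ)) = 0 :=
        (Ideal.Quotient.eq_zero_iff_mem).mpr hz
      rw [map_sum] at this
      rw [← this]
      refine Finset.sum_congr rfl fun k _ => ?_
      rw [← Ideal.Quotient.mkₐ_eq_mk ℚ I, map_smul]
    have := Fintype.linearIndependent_iff.mp hindep c hzero
    exact hc (funext this)
  -- pass to the fraction field
  have hinj : Function.Injective (algebraMap R K) := IsFractionRing.injective R K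
  set basK : Module.Basis (Fin D) K (K ⊗[R] B) := bas.baseChange K with hbasK
  set v : Fin D → K ⊗[R] B := fun k => (1 : K) ⊗ₜ[R] (u ^ (k : ℕ)) with hv
  have htm : basK.toMatrix v = M.map (algebraMap R K) := by
    ext i k
    rw [Module.Basis.toMatrix_apply, Matrix.map_apply, hv, Module.Basis.baseChange_repr_tmul,
      Algebra.smul_def, mul_one]
    rfl
  have hdetK : basK.det v ≠ 0 := by
    rw [Module.Basis.det_apply, htm, ← RingHom.mapMatrix_apply, ← RingHom.map_det]
    intro h
    exact hdet (hinj (by rw [h, map_zero]))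
  have hbasis := (Module.Basis.is_basis_iff_det basK).mpr (isUnit_iff_ne_zero.mpr hdetK)
  obtain ⟨hli, hspan⟩ := hbasis
  refine ⟨hli, hspan, ?_⟩
  -- the minimal polynomial via a power basis
  have hnt : Nontrivial (K ⊗[R] B) := by
    refine nontrivial_of_ne (v ⟨0, hD⟩) 0 ?_
    intro h
    exact hli.ne_zero ⟨0, hD⟩ h
  let pb : PowerBasis K (K ⊗[R] B) :=
    { gen := (1 : K) ⊗ₜ[R] u
      dim := D
      basis := Module.Basis.mk hli hspan.ge
      basis_eq_pow := by
        intro i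
        rw [Module.Basis.mk_apply, hv, Algebra.TensorProduct.tmul_pow, one_pow] }
  exact pb.natDegree_minpoly
end
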